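/- arXiv:1904.09694 — 3 statements merged into one kernel-verified Lean document; each statement's English description precedes it below -/
import Mathlib

section
/- Let u be a transpositional sequence on Fin 3 such that each of the points 0, 1, 2 lies in the support of some term of u. Then u is conjugacy invariant if and only if either the length of u is odd, or exactly two of the three transpositions (0 1), (1 2), (0 2) occur in u and at least one of those two occurs exactly once. -/
/-- The set of products (compositions, in order) of all rearrangements of `s`. -/
def ProdSet {n : ℕ} (s : List (Equiv.Perm (Fin n))) : Set (Equiv.Perm (Fin n)) :=
  {g | ∃ r : List (Equiv.Perm (Fin n)), r.Perm s ∧ r.prod = g}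

/-- `s` is permutationally complete iff `ProdSet s` is the set of even permutations
or the set of odd permutations. -/
def PermComplete {n : ℕ} (s : List (Equiv.Perm (Fin n))) : Prop :=
  ProdSet s = {g | Equiv.Perm.sign g = 1} ∨ ProdSet s = {g | Equiv.Perm.sign g = -1}

/-- `u` is a transpositional sequence: each term is a transposition. -/
def IsTranspositional {n : ℕ} (u : List (Equiv.Perm (Fin n))) : Prop :=
  ∀ g ∈ u, ∃ x y : Fin n, x ≠ y ∧ g = Equiv.swap x y

/-- The simple graph of a transpositional sequence: an edge `{x,y}` iff `(x y)` occurs in `u`. -/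
def TranspGraph {n : ℕ} (u : List (Equiv.Perm (Fin n))) : SimpleGraph (Fin n) where
  Adj x y := x ≠ y ∧ Equiv.swap x y ∈ u
  symm := by
    constructor
    intro x y h
    exact ⟨h.1.symm, by rw [Equiv.swap_comm]; exact h.2⟩
  loopless := by
    constructor
    intro x h
    exact h.1 rfl

/-- `s` is conjugacy invariant iff all elements of `ProdSet s` are pairwise conjugate. -/
def ConjInv {n : ℕ} (s : List (Equiv.Perm (Fin n))) : Prop :=
  ∀ f ∈ ProdSet s, ∀ g ∈ ProdSet s, IsConj f g

def pa : Equiv.Perm (Fin 3) := Equiv.swap 0 1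
def pb : Equiv.Perm (Fin 3) := Equiv.swap 1 2
def pc : Equiv.Perm (Fin 3) := Equiv.swap 0 2
lemma ne_ab : pa ≠ pb := by decide
lemma ne_ba : pb ≠ pa := by decide
lemma ne_ac : pa ≠ pc := by decide
lemma ne_ca : pc ≠ pa := by decide
lemma ne_bc : pb ≠ pc := by decide
lemma ne_cb : pc ≠ pb := by decide

lemma pow_of_even {G : Type*} [Monoid G] {q : G} (hq : q * q = 1) {n : ℕ} (h : n % 2 = 0) :
    q ^ n = 1 := by
  obtain ⟨t, rfl⟩ := (Nat.even_iff.mpr h)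
  rw [← two_mul, pow_mul, pow_two, hq, one_pow]

lemma pow_of_odd {G : Type*} [Monoid G] {q : G} (hq : q * q = 1) {n : ℕ} (h : n % 2 = 1) :
    q ^ n = q := by
  obtain ⟨t, rfl⟩ := (Nat.odd_iff.mpr h)
  rw [pow_add, pow_mul, pow_two, hq, one_pow, one_mul, pow_one]

lemma build_perm (u pre : List (Equiv.Perm (Fin 3)))
    (hm : ∀ g ∈ u, g = pa ∨ g = pb ∨ g = pc)
    (h1 : pre.count pa ≤ u.count pa) (h2 : pre.count pb ≤ u.count pb)
    (h3 : pre.count pc ≤ u.count pc)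
    (hpre : ∀ g ∈ pre, g = pa ∨ g = pb ∨ g = pc) :
    u.Perm (pre ++ List.replicate (u.count pa - pre.count pa) pa
      ++ List.replicate (u.count pb - pre.count pb) pb
      ++ List.replicate (u.count pc - pre.count pc) pc) := by
  rw [List.perm_iff_count]
  intro x
  by_cases hxa : x = pa
  · subst hxa
    simp only [List.count_append, List.count_replicate, beq_iff_eq, if_pos rfl, ite_true,
      if_neg ne_ba, if_neg ne_ca]
    omega
  · by_cases hxb : x = pb
    · subst hxb
      simp only [List.count_append, List.count_replicate, beq_iff_eq, if_pos rfl, ite_true,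
        if_neg ne_ab, if_neg ne_cb]
      omega
    · by_cases hxc : x = pc
      · subst hxc
        simp only [List.count_append, List.count_replicate, beq_iff_eq, if_pos rfl, ite_true,
          if_neg ne_ac, if_neg ne_bc]
        omega
      · have hu : u.count x = 0 := by
          rw [List.count_eq_zero]
          intro hx
          rcases hm x hx with rfl | rfl | rfl <;> simp_all
        have hp : pre.count x = 0 := by
          rw [List.count_eq_zero]
          intro hx
          rcases hpre x hx with rfl | rfl | rfl <;> simp_all
        simp only [List.count_append, List.count_replicate, beq_iff_eq,
          if_neg (Ne.symm hxa), if_neg (Ne.symm hxb), if_neg (Ne.symm hxc), hu, hp]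

lemma prodSet_build (u pre : List (Equiv.Perm (Fin 3)))
    (hm : ∀ g ∈ u, g = pa ∨ g = pb ∨ g = pc)
    (h1 : pre.count pa ≤ u.count pa) (h2 : pre.count pb ≤ u.count pb)
    (h3 : pre.count pc ≤ u.count pc)
    (hpre : ∀ g ∈ pre, g = pa ∨ g = pb ∨ g = pc) :
    pre.prod * pa ^ (u.count pa - pre.count pa) * pb ^ (u.count pb - pre.count pb)
      * pc ^ (u.count pc - pre.count pc) ∈ ProdSet u := by
  refine ⟨_, (build_perm u pre hm h1 h2 h3 hpre).symm, ?_⟩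
  simp [List.prod_append, List.prod_replicate, mul_assoc]

lemma length_eq_counts (u : List (Equiv.Perm (Fin 3)))
    (hm : ∀ g ∈ u, g = pa ∨ g = pb ∨ g = pc) :
    u.length = u.count pa + u.count pb + u.count pc := by
  have h := (build_perm u [] hm (by simp) (by simp) (by simp) (by simp)).length_eq
  simp at h
  omega
lemma prod_ne_one_of_single {G : Type*} [Group G] [DecidableEq G] {p q : G} (hq : q * q = 1)
    (hp1 : p ≠ 1) (hpq : p ≠ q) {r : List G} (hr : ∀ x ∈ r, x = p ∨ x = q)
    (hc : r.count p = 1) : r.prod ≠ 1 := by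
  have hpmem : p ∈ r := List.count_pos_iff.mp (by omega)
  obtain ⟨s, t, rfl⟩ := List.append_of_mem hpmem
  have hcc : (s ++ p :: t).count p = s.count p + (t.count p + 1) := by
    simp [List.count_append, List.count_cons]
  have hcs : s.count p = 0 := by omega
  have hct : t.count p = 0 := by omega
  have hs : ∀ x ∈ s, x = q := by
    intro x hx
    rcases hr x (by simp [hx]) with rfl | rfl
    · exact absurd (List.count_pos_iff.mpr hx) (by omega)
    · rfl
  have ht : ∀ x ∈ t, x = q := by
    intro x hx
    rcases hr x (by simp [hx]) with rfl | rfl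
    · exact absurd (List.count_pos_iff.mpr hx) (by omega)
    · rfl
  rw [List.prod_append, List.prod_cons, List.prod_eq_pow_card s q hs,
    List.prod_eq_pow_card t q ht]
  intro h
  have hkey : p = q ^ (s.length + t.length) := by
    have h2 : p = (q ^ s.length)⁻¹ * (q ^ s.length * (p * q ^ t.length)) * (q ^ t.length)⁻¹ := by
      group
    rw [h, mul_one] at h2
    rw [← inv_pow, ← inv_pow, inv_eq_of_mul_eq_one_right hq, ← pow_add] at h2
    exact h2
  rcases Nat.even_or_odd (s.length + t.length) with he | ho
  · exact hp1 (hkey.trans (pow_of_even hq (Nat.even_iff.mp he)))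
  · exact hpq (hkey.trans (pow_of_odd hq (Nat.odd_iff.mp ho)))

lemma sign_of_mem_prodSet {u : List (Equiv.Perm (Fin 3))} (htr : IsTranspositional u)
    {g : Equiv.Perm (Fin 3)} (hg : g ∈ ProdSet u) :
    Equiv.Perm.sign g = (-1) ^ u.length := by
  obtain ⟨r, hru, rfl⟩ := hg
  rw [Equiv.Perm.sign_prod_list_swap (fun x hx => htr x (hru.mem_iff.mp hx)), hru.length_eq]

lemma six_elems (f : Equiv.Perm (Fin 3)) :
    f = 1 ∨ f = pa ∨ f = pb ∨ f = pc ∨ f = pa * pb ∨ f = pb * pa := by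
  revert f; decide

lemma sign_pa : Equiv.Perm.sign pa = -1 := by
  exact Equiv.Perm.sign_swap (by decide)
lemma sign_pb : Equiv.Perm.sign pb = -1 := by
  exact Equiv.Perm.sign_swap (by decide)
lemma sign_pc : Equiv.Perm.sign pc = -1 := by
  exact Equiv.Perm.sign_swap (by decide)

lemma class_neg {f : Equiv.Perm (Fin 3)} (hf : Equiv.Perm.sign f = -1) :
    f = pa ∨ f = pb ∨ f = pc := by
  rcases six_elems f with rfl | rfl | rfl | rfl | rfl | rfl
  · rw [map_one] at hf; exact absurd hf (by decide)
  · exact Or.inl rfl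
  · exact Or.inr (Or.inl rfl)
  · exact Or.inr (Or.inr rfl)
  · rw [map_mul, sign_pa, sign_pb] at hf; exact absurd hf (by decide)
  · rw [map_mul, sign_pa, sign_pb] at hf; exact absurd hf (by decide)

lemma class_pos {f : Equiv.Perm (Fin 3)} (hf : Equiv.Perm.sign f = 1) (h1 : f ≠ 1) :
    f = pa * pb ∨ f = pb * pa := by
  rcases six_elems f with rfl | rfl | rfl | rfl | rfl | rfl
  · exact absurd rfl h1
  · rw [sign_pa] at hf; exact absurd hf (by decide)
  · rw [sign_pb] at hf; exact absurd hf (by decide)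
  · rw [sign_pc] at hf; exact absurd hf (by decide)
  · exact Or.inl rfl
  · exact Or.inr rfl

lemma isConj_neg {f g : Equiv.Perm (Fin 3)} (hf : Equiv.Perm.sign f = -1)
    (hg : Equiv.Perm.sign g = -1) : IsConj f g := by
  rw [isConj_iff]
  exact (by decide : ∀ f g : Equiv.Perm (Fin 3), (f = pa ∨ f = pb ∨ f = pc) →
    (g = pa ∨ g = pb ∨ g = pc) → ∃ w : Equiv.Perm (Fin 3), w * f * w⁻¹ = g)
    f g (class_neg hf) (class_neg hg)

lemma isConj_pos {f g : Equiv.Perm (Fin 3)} (hf : Equiv.Perm.sign f = 1) (hf1 : f ≠ 1)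
    (hg : Equiv.Perm.sign g = 1) (hg1 : g ≠ 1) : IsConj f g := by
  rw [isConj_iff]
  exact (by decide : ∀ f g : Equiv.Perm (Fin 3), (f = pa * pb ∨ f = pb * pa) →
    (g = pa * pb ∨ g = pb * pa) → ∃ w : Equiv.Perm (Fin 3), w * f * w⁻¹ = g)
    f g (class_pos hf hf1) (class_pos hg hg1)

lemma eq_one_of_isConj_one {G : Type*} [Group G] {g : G} (h : IsConj 1 g) : g = 1 := by
  obtain ⟨w, hw⟩ := isConj_iff.mp h
  rw [← hw, mul_one, mul_inv_cancel]

lemma ne_one_all {u : List (Equiv.Perm (Fin 3))} {p q : Equiv.Perm (Fin 3)}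
    (hq : q * q = 1) (hp1 : p ≠ 1) (hpq : p ≠ q)
    (hu : ∀ x ∈ u, x = p ∨ x = q) (hc : u.count p = 1) :
    ∀ x ∈ ProdSet u, x ≠ 1 := by
  intro x hx
  obtain ⟨r, hru, rfl⟩ := hx
  exact prod_ne_one_of_single hq hp1 hpq (fun y hy => hu y (hru.mem_iff.mp hy))
    ((hru.count_eq p).trans hc)


set_option maxHeartbeats 1600000 in
theorem stmt_11 (u : List (Equiv.Perm (Fin 3)))
    (htr : IsTranspositional u)
    (hcov : ∀ v : Fin 3, ∃ g ∈ u, v ∈ g.support) :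
    ConjInv u ↔
      (Odd u.length ∨
        ((Equiv.swap (0 : Fin 3) 1 ∈ u ∧ Equiv.swap (1 : Fin 3) 2 ∈ u ∧
            Equiv.swap (0 : Fin 3) 2 ∉ u ∧
            (u.count (Equiv.swap (0 : Fin 3) 1) = 1 ∨
              u.count (Equiv.swap (1 : Fin 3) 2) = 1)) ∨
         (Equiv.swap (0 : Fin 3) 1 ∈ u ∧ Equiv.swap (0 : Fin 3) 2 ∈ u ∧
            Equiv.swap (1 : Fin 3) 2 ∉ u ∧
            (u.count (Equiv.swap (0 : Fin 3) 1) = 1 ∨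
              u.count (Equiv.swap (0 : Fin 3) 2) = 1)) ∨
         (Equiv.swap (1 : Fin 3) 2 ∈ u ∧ Equiv.swap (0 : Fin 3) 2 ∈ u ∧
            Equiv.swap (0 : Fin 3) 1 ∉ u ∧
            (u.count (Equiv.swap (1 : Fin 3) 2) = 1 ∨
              u.count (Equiv.swap (0 : Fin 3) 2) = 1)))) := by
  have hmem : ∀ g ∈ u, g = pa ∨ g = pb ∨ g = pc := by
    intro g hg
    obtain ⟨x, y, hxy, rfl⟩ := htr g hg
    exact (by decide : ∀ x y : Fin 3, x ≠ y →
      (Equiv.swap x y = pa ∨ Equiv.swap x y = pb ∨ Equiv.swap x y = pc)) x y hxy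
  have hlen := length_eq_counts u hmem
  have hc0 : 0 < u.count pa ∨ 0 < u.count pc := by
    obtain ⟨g, hg, hs⟩ := hcov 0
    rcases hmem g hg with rfl | rfl | rfl
    · exact Or.inl (List.count_pos_iff.mpr hg)
    · exact absurd hs (by decide)
    · exact Or.inr (List.count_pos_iff.mpr hg)
  have hc1 : 0 < u.count pa ∨ 0 < u.count pb := by
    obtain ⟨g, hg, hs⟩ := hcov 1
    rcases hmem g hg with rfl | rfl | rfl
    · exact Or.inl (List.count_pos_iff.mpr hg)
    · exact Or.inr (List.count_pos_iff.mpr hg)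
    · exact absurd hs (by decide)
  have hc2 : 0 < u.count pb ∨ 0 < u.count pc := by
    obtain ⟨g, hg, hs⟩ := hcov 2
    rcases hmem g hg with rfl | rfl | rfl
    · exact absurd hs (by decide)
    · exact Or.inl (List.count_pos_iff.mpr hg)
    · exact Or.inr (List.count_pos_iff.mpr hg)
  simp only [show Equiv.swap (0 : Fin 3) 1 = pa from rfl,
    show Equiv.swap (1 : Fin 3) 2 = pb from rfl,
    show Equiv.swap (0 : Fin 3) 2 = pc from rfl, ← List.count_pos_iff]
  constructor
  · -- ConjInv → conditions
    intro hci
    by_contra hR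
    simp only [not_or] at hR
    obtain ⟨hR0, hR1, hR2, hR3⟩ := hR
    have hE : u.length % 2 = 0 := Nat.even_iff.mp (Nat.not_odd_iff_even.mp hR0)
    rw [hlen] at hE
    rcases Nat.eq_zero_or_pos (u.count pc) with h0 | hCpos
    · have hApos : 0 < u.count pa := by omega
      have hBpos : 0 < u.count pb := by omega
      have hne1 : u.count pa ≠ 1 ∧ u.count pb ≠ 1 := by
        constructor <;> (intro hx; exact hR1 ⟨hApos, hBpos, by omega, by omega⟩)
      have hpar : (2 ≤ u.count pa ∧ 2 ≤ u.count pb ∧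
          u.count pa % 2 = 0 ∧ u.count pb % 2 = 0) ∨
          (3 ≤ u.count pa ∧ 3 ≤ u.count pb ∧
          u.count pa % 2 = 1 ∧ u.count pb % 2 = 1) := by omega
      rcases hpar with ⟨hA, hB, hAe, hBe⟩ | ⟨hA, hB, hAe, hBe⟩
      · have h1 := prodSet_build u [] hmem (by simp) (by simp) (by simp) (by simp)
        simp only [List.prod_nil, List.count_nil, Nat.sub_zero, one_mul] at h1
        rw [pow_of_even (by decide : pa * pa = 1) (by omega), pow_of_even (by decide : pb * pb = 1) (by omega), h0, pow_zero] at h1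
        simp only [one_mul, mul_one] at h1
        have h2 := prodSet_build u [pa, pb, pa, pb] hmem
          (by simp only [show ([pa, pb, pa, pb] : List (Equiv.Perm (Fin 3))).count pa = 2 from by decide]; omega)
          (by simp only [show ([pa, pb, pa, pb] : List (Equiv.Perm (Fin 3))).count pb = 2 from by decide]; omega)
          (by simp only [show ([pa, pb, pa, pb] : List (Equiv.Perm (Fin 3))).count pc = 0 from by decide]; omega)
          (by decide)
        simp only [show ([pa, pb, pa, pb] : List (Equiv.Perm (Fin 3))).count pa = 2 from by decide, show ([pa, pb, pa, pb] : List (Equiv.Perm (Fin 3))).count pb = 2 from by decide, show ([pa, pb, pa, pb] : List (Equiv.Perm (Fin 3))).count pc = 0 from by decide, Nat.sub_zero] at h2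
        rw [pow_of_even (by decide : pa * pa = 1) (by omega), pow_of_even (by decide : pb * pb = 1) (by omega), h0, pow_zero] at h2
        simp only [one_mul, mul_one] at h2
        exact (by decide : ([pa, pb, pa, pb] : List (Equiv.Perm (Fin 3))).prod ≠ 1) (eq_one_of_isConj_one (hci 1 h1 _ h2))
      · have h1 := prodSet_build u [pa, pb, pa, pb, pa, pb] hmem
          (by simp only [show ([pa, pb, pa, pb, pa, pb] : List (Equiv.Perm (Fin 3))).count pa = 3 from by decide]; omega)
          (by simp only [show ([pa, pb, pa, pb, pa, pb] : List (Equiv.Perm (Fin 3))).count pb = 3 from by decide]; omega)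
          (by simp only [show ([pa, pb, pa, pb, pa, pb] : List (Equiv.Perm (Fin 3))).count pc = 0 from by decide]; omega)
          (by decide)
        simp only [show ([pa, pb, pa, pb, pa, pb] : List (Equiv.Perm (Fin 3))).count pa = 3 from by decide, show ([pa, pb, pa, pb, pa, pb] : List (Equiv.Perm (Fin 3))).count pb = 3 from by decide, show ([pa, pb, pa, pb, pa, pb] : List (Equiv.Perm (Fin 3))).count pc = 0 from by decide, Nat.sub_zero] at h1
        rw [pow_of_even (by decide : pa * pa = 1) (by omega), pow_of_even (by decide : pb * pb = 1) (by omega), h0, pow_zero] at h1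
        simp only [one_mul, mul_one] at h1
        rw [show ([pa, pb, pa, pb, pa, pb] : List (Equiv.Perm (Fin 3))).prod = 1 from by decide] at h1
        have h2 := prodSet_build u [] hmem (by simp) (by simp) (by simp) (by simp)
        simp only [List.prod_nil, List.count_nil, Nat.sub_zero, one_mul] at h2
        rw [pow_of_odd (by decide : pa * pa = 1) (by omega), pow_of_odd (by decide : pb * pb = 1) (by omega), h0, pow_zero] at h2
        simp only [one_mul, mul_one] at h2
        exact (by decide : pa * pb ≠ 1) (eq_one_of_isConj_one (hci 1 h1 _ h2))
    rcases Nat.eq_zero_or_pos (u.count pb) with h0 | hBpos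
    · have hApos : 0 < u.count pa := by omega
      have hne1 : u.count pa ≠ 1 ∧ u.count pc ≠ 1 := by
        constructor <;> (intro hx; exact hR2 ⟨hApos, hCpos, by omega, by omega⟩)
      have hpar : (2 ≤ u.count pa ∧ 2 ≤ u.count pc ∧
          u.count pa % 2 = 0 ∧ u.count pc % 2 = 0) ∨
          (3 ≤ u.count pa ∧ 3 ≤ u.count pc ∧
          u.count pa % 2 = 1 ∧ u.count pc % 2 = 1) := by omega
      rcases hpar with ⟨hA, hC, hAe, hCe⟩ | ⟨hA, hC, hAe, hCe⟩
      · have h1 := prodSet_build u [] hmem (by simp) (by simp) (by simp) (by simp)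
        simp only [List.prod_nil, List.count_nil, Nat.sub_zero, one_mul] at h1
        rw [pow_of_even (by decide : pa * pa = 1) (by omega), h0, pow_zero, pow_of_even (by decide : pc * pc = 1) (by omega)] at h1
        simp only [one_mul, mul_one] at h1
        have h2 := prodSet_build u [pa, pc, pa, pc] hmem
          (by simp only [show ([pa, pc, pa, pc] : List (Equiv.Perm (Fin 3))).count pa = 2 from by decide]; omega)
          (by simp only [show ([pa, pc, pa, pc] : List (Equiv.Perm (Fin 3))).count pb = 0 from by decide]; omega)
          (by simp only [show ([pa, pc, pa, pc] : List (Equiv.Perm (Fin 3))).count pc = 2 from by decide]; omega)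
          (by decide)
        simp only [show ([pa, pc, pa, pc] : List (Equiv.Perm (Fin 3))).count pa = 2 from by decide, show ([pa, pc, pa, pc] : List (Equiv.Perm (Fin 3))).count pb = 0 from by decide, show ([pa, pc, pa, pc] : List (Equiv.Perm (Fin 3))).count pc = 2 from by decide, Nat.sub_zero] at h2
        rw [pow_of_even (by decide : pa * pa = 1) (by omega), h0, pow_zero, pow_of_even (by decide : pc * pc = 1) (by omega)] at h2
        simp only [one_mul, mul_one] at h2
        exact (by decide : ([pa, pc, pa, pc] : List (Equiv.Perm (Fin 3))).prod ≠ 1) (eq_one_of_isConj_one (hci 1 h1 _ h2))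
      · have h1 := prodSet_build u [pa, pc, pa, pc, pa, pc] hmem
          (by simp only [show ([pa, pc, pa, pc, pa, pc] : List (Equiv.Perm (Fin 3))).count pa = 3 from by decide]; omega)
          (by simp only [show ([pa, pc, pa, pc, pa, pc] : List (Equiv.Perm (Fin 3))).count pb = 0 from by decide]; omega)
          (by simp only [show ([pa, pc, pa, pc, pa, pc] : List (Equiv.Perm (Fin 3))).count pc = 3 from by decide]; omega)
          (by decide)
        simp only [show ([pa, pc, pa, pc, pa, pc] : List (Equiv.Perm (Fin 3))).count pa = 3 from by decide, show ([pa, pc, pa, pc, pa, pc] : List (Equiv.Perm (Fin 3))).count pb = 0 from by decide, show ([pa, pc, pa, pc, pa, pc] : List (Equiv.Perm (Fin 3))).count pc = 3 from by decide, Nat.sub_zero] at h1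
        rw [pow_of_even (by decide : pa * pa = 1) (by omega), h0, pow_zero, pow_of_even (by decide : pc * pc = 1) (by omega)] at h1
        simp only [one_mul, mul_one] at h1
        rw [show ([pa, pc, pa, pc, pa, pc] : List (Equiv.Perm (Fin 3))).prod = 1 from by decide] at h1
        have h2 := prodSet_build u [] hmem (by simp) (by simp) (by simp) (by simp)
        simp only [List.prod_nil, List.count_nil, Nat.sub_zero, one_mul] at h2
        rw [pow_of_odd (by decide : pa * pa = 1) (by omega), h0, pow_zero, pow_of_odd (by decide : pc * pc = 1) (by omega)] at h2
        simp only [one_mul, mul_one] at h2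
        exact (by decide : pa * pc ≠ 1) (eq_one_of_isConj_one (hci 1 h1 _ h2))
    rcases Nat.eq_zero_or_pos (u.count pa) with h0 | hApos
    · have hne1 : u.count pb ≠ 1 ∧ u.count pc ≠ 1 := by
        constructor <;> (intro hx; exact hR3 ⟨hBpos, hCpos, by omega, by omega⟩)
      have hpar : (2 ≤ u.count pb ∧ 2 ≤ u.count pc ∧
          u.count pb % 2 = 0 ∧ u.count pc % 2 = 0) ∨
          (3 ≤ u.count pb ∧ 3 ≤ u.count pc ∧
          u.count pb % 2 = 1 ∧ u.count pc % 2 = 1) := by omega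
      rcases hpar with ⟨hB, hC, hBe, hCe⟩ | ⟨hB, hC, hBe, hCe⟩
      · have h1 := prodSet_build u [] hmem (by simp) (by simp) (by simp) (by simp)
        simp only [List.prod_nil, List.count_nil, Nat.sub_zero, one_mul] at h1
        rw [h0, pow_zero, pow_of_even (by decide : pb * pb = 1) (by omega), pow_of_even (by decide : pc * pc = 1) (by omega)] at h1
        simp only [one_mul, mul_one] at h1
        have h2 := prodSet_build u [pb, pc, pb, pc] hmem
          (by simp only [show ([pb, pc, pb, pc] : List (Equiv.Perm (Fin 3))).count pa = 0 from by decide]; omega)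
          (by simp only [show ([pb, pc, pb, pc] : List (Equiv.Perm (Fin 3))).count pb = 2 from by decide]; omega)
          (by simp only [show ([pb, pc, pb, pc] : List (Equiv.Perm (Fin 3))).count pc = 2 from by decide]; omega)
          (by decide)
        simp only [show ([pb, pc, pb, pc] : List (Equiv.Perm (Fin 3))).count pa = 0 from by decide, show ([pb, pc, pb, pc] : List (Equiv.Perm (Fin 3))).count pb = 2 from by decide, show ([pb, pc, pb, pc] : List (Equiv.Perm (Fin 3))).count pc = 2 from by decide, Nat.sub_zero] at h2
        rw [h0, pow_zero, pow_of_even (by decide : pb * pb = 1) (by omega), pow_of_even (by decide : pc * pc = 1) (by omega)] at h2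
        simp only [one_mul, mul_one] at h2
        exact (by decide : ([pb, pc, pb, pc] : List (Equiv.Perm (Fin 3))).prod ≠ 1) (eq_one_of_isConj_one (hci 1 h1 _ h2))
      · have h1 := prodSet_build u [pb, pc, pb, pc, pb, pc] hmem
          (by simp only [show ([pb, pc, pb, pc, pb, pc] : List (Equiv.Perm (Fin 3))).count pa = 0 from by decide]; omega)
          (by simp only [show ([pb, pc, pb, pc, pb, pc] : List (Equiv.Perm (Fin 3))).count pb = 3 from by decide]; omega)
          (by simp only [show ([pb, pc, pb, pc, pb, pc] : List (Equiv.Perm (Fin 3))).count pc = 3 from by decide]; omega)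
          (by decide)
        simp only [show ([pb, pc, pb, pc, pb, pc] : List (Equiv.Perm (Fin 3))).count pa = 0 from by decide, show ([pb, pc, pb, pc, pb, pc] : List (Equiv.Perm (Fin 3))).count pb = 3 from by decide, show ([pb, pc, pb, pc, pb, pc] : List (Equiv.Perm (Fin 3))).count pc = 3 from by decide, Nat.sub_zero] at h1
        rw [h0, pow_zero, pow_of_even (by decide : pb * pb = 1) (by omega), pow_of_even (by decide : pc * pc = 1) (by omega)] at h1
        simp only [one_mul, mul_one] at h1
        rw [show ([pb, pc, pb, pc, pb, pc] : List (Equiv.Perm (Fin 3))).prod = 1 from by decide] at h1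
        have h2 := prodSet_build u [] hmem (by simp) (by simp) (by simp) (by simp)
        simp only [List.prod_nil, List.count_nil, Nat.sub_zero, one_mul] at h2
        rw [h0, pow_zero, pow_of_odd (by decide : pb * pb = 1) (by omega), pow_of_odd (by decide : pc * pc = 1) (by omega)] at h2
        simp only [one_mul, mul_one] at h2
        exact (by decide : pb * pc ≠ 1) (eq_one_of_isConj_one (hci 1 h1 _ h2))
    have hpar : (2 ≤ u.count pa ∧ u.count pa % 2 = 0 ∧
          u.count pb % 2 = 1 ∧ u.count pc % 2 = 1) ∨
        (u.count pa % 2 = 1 ∧ 2 ≤ u.count pb ∧ u.count pb % 2 = 0 ∧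
          u.count pc % 2 = 1) ∨
        (u.count pa % 2 = 1 ∧ u.count pb % 2 = 1 ∧ 2 ≤ u.count pc ∧
          u.count pc % 2 = 0) ∨
        (2 ≤ u.count pa ∧ 2 ≤ u.count pb ∧ 2 ≤ u.count pc ∧
          u.count pa % 2 = 0 ∧ u.count pb % 2 = 0 ∧ u.count pc % 2 = 0) := by omega
    rcases hpar with ⟨hA, hAe, hBe, hCe⟩ | ⟨hAe, hB, hBe, hCe⟩ |
      ⟨hAe, hBe, hC, hCe⟩ | ⟨hA, hB, hC, hAe, hBe, hCe⟩
    · have h1 := prodSet_build u [pb, pa, pc, pa] hmem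
        (by simp only [show ([pb, pa, pc, pa] : List (Equiv.Perm (Fin 3))).count pa = 2 from by decide]; omega)
        (by simp only [show ([pb, pa, pc, pa] : List (Equiv.Perm (Fin 3))).count pb = 1 from by decide]; omega)
        (by simp only [show ([pb, pa, pc, pa] : List (Equiv.Perm (Fin 3))).count pc = 1 from by decide]; omega)
        (by decide)
      simp only [show ([pb, pa, pc, pa] : List (Equiv.Perm (Fin 3))).count pa = 2 from by decide, show ([pb, pa, pc, pa] : List (Equiv.Perm (Fin 3))).count pb = 1 from by decide, show ([pb, pa, pc, pa] : List (Equiv.Perm (Fin 3))).count pc = 1 from by decide, Nat.sub_zero] at h1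
      rw [pow_of_even (by decide : pa * pa = 1) (by omega), pow_of_even (by decide : pb * pb = 1) (by omega), pow_of_even (by decide : pc * pc = 1) (by omega)] at h1
      simp only [one_mul, mul_one] at h1
      rw [show ([pb, pa, pc, pa] : List (Equiv.Perm (Fin 3))).prod = 1 from by decide] at h1
      have h2 := prodSet_build u [pb, pc] hmem
        (by simp only [show ([pb, pc] : List (Equiv.Perm (Fin 3))).count pa = 0 from by decide]; omega)
        (by simp only [show ([pb, pc] : List (Equiv.Perm (Fin 3))).count pb = 1 from by decide]; omega)
        (by simp only [show ([pb, pc] : List (Equiv.Perm (Fin 3))).count pc = 1 from by decide]; omega)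
        (by decide)
      simp only [show ([pb, pc] : List (Equiv.Perm (Fin 3))).count pa = 0 from by decide, show ([pb, pc] : List (Equiv.Perm (Fin 3))).count pb = 1 from by decide, show ([pb, pc] : List (Equiv.Perm (Fin 3))).count pc = 1 from by decide, Nat.sub_zero] at h2
      rw [pow_of_even (by decide : pa * pa = 1) (by omega), pow_of_even (by decide : pb * pb = 1) (by omega), pow_of_even (by decide : pc * pc = 1) (by omega)] at h2
      simp only [one_mul, mul_one] at h2
      exact (by decide : ([pb, pc] : List (Equiv.Perm (Fin 3))).prod ≠ 1) (eq_one_of_isConj_one (hci 1 h1 _ h2))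
    · have h1 := prodSet_build u [pa, pb, pc, pb] hmem
        (by simp only [show ([pa, pb, pc, pb] : List (Equiv.Perm (Fin 3))).count pa = 1 from by decide]; omega)
        (by simp only [show ([pa, pb, pc, pb] : List (Equiv.Perm (Fin 3))).count pb = 2 from by decide]; omega)
        (by simp only [show ([pa, pb, pc, pb] : List (Equiv.Perm (Fin 3))).count pc = 1 from by decide]; omega)
        (by decide)
      simp only [show ([pa, pb, pc, pb] : List (Equiv.Perm (Fin 3))).count pa = 1 from by decide, show ([pa, pb, pc, pb] : List (Equiv.Perm (Fin 3))).count pb = 2 from by decide, show ([pa, pb, pc, pb] : List (Equiv.Perm (Fin 3))).count pc = 1 from by decide, Nat.sub_zero] at h1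
      rw [pow_of_even (by decide : pa * pa = 1) (by omega), pow_of_even (by decide : pb * pb = 1) (by omega), pow_of_even (by decide : pc * pc = 1) (by omega)] at h1
      simp only [one_mul, mul_one] at h1
      rw [show ([pa, pb, pc, pb] : List (Equiv.Perm (Fin 3))).prod = 1 from by decide] at h1
      have h2 := prodSet_build u [pa, pc] hmem
        (by simp only [show ([pa, pc] : List (Equiv.Perm (Fin 3))).count pa = 1 from by decide]; omega)
        (by simp only [show ([pa, pc] : List (Equiv.Perm (Fin 3))).count pb = 0 from by decide]; omega)
        (by simp only [show ([pa, pc] : List (Equiv.Perm (Fin 3))).count pc = 1 from by decide]; omega)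
        (by decide)
      simp only [show ([pa, pc] : List (Equiv.Perm (Fin 3))).count pa = 1 from by decide, show ([pa, pc] : List (Equiv.Perm (Fin 3))).count pb = 0 from by decide, show ([pa, pc] : List (Equiv.Perm (Fin 3))).count pc = 1 from by decide, Nat.sub_zero] at h2
      rw [pow_of_even (by decide : pa * pa = 1) (by omega), pow_of_even (by decide : pb * pb = 1) (by omega), pow_of_even (by decide : pc * pc = 1) (by omega)] at h2
      simp only [one_mul, mul_one] at h2
      exact (by decide : ([pa, pc] : List (Equiv.Perm (Fin 3))).prod ≠ 1) (eq_one_of_isConj_one (hci 1 h1 _ h2))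
    · have h1 := prodSet_build u [pa, pc, pb, pc] hmem
        (by simp only [show ([pa, pc, pb, pc] : List (Equiv.Perm (Fin 3))).count pa = 1 from by decide]; omega)
        (by simp only [show ([pa, pc, pb, pc] : List (Equiv.Perm (Fin 3))).count pb = 1 from by decide]; omega)
        (by simp only [show ([pa, pc, pb, pc] : List (Equiv.Perm (Fin 3))).count pc = 2 from by decide]; omega)
        (by decide)
      simp only [show ([pa, pc, pb, pc] : List (Equiv.Perm (Fin 3))).count pa = 1 from by decide, show ([pa, pc, pb, pc] : List (Equiv.Perm (Fin 3))).count pb = 1 from by decide, show ([pa, pc, pb, pc] : List (Equiv.Perm (Fin 3))).count pc = 2 from by decide, Nat.sub_zero] at h1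
      rw [pow_of_even (by decide : pa * pa = 1) (by omega), pow_of_even (by decide : pb * pb = 1) (by omega), pow_of_even (by decide : pc * pc = 1) (by omega)] at h1
      simp only [one_mul, mul_one] at h1
      rw [show ([pa, pc, pb, pc] : List (Equiv.Perm (Fin 3))).prod = 1 from by decide] at h1
      have h2 := prodSet_build u [pa, pb] hmem
        (by simp only [show ([pa, pb] : List (Equiv.Perm (Fin 3))).count pa = 1 from by decide]; omega)
        (by simp only [show ([pa, pb] : List (Equiv.Perm (Fin 3))).count pb = 1 from by decide]; omega)
        (by simp only [show ([pa, pb] : List (Equiv.Perm (Fin 3))).count pc = 0 from by decide]; omega)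
        (by decide)
      simp only [show ([pa, pb] : List (Equiv.Perm (Fin 3))).count pa = 1 from by decide, show ([pa, pb] : List (Equiv.Perm (Fin 3))).count pb = 1 from by decide, show ([pa, pb] : List (Equiv.Perm (Fin 3))).count pc = 0 from by decide, Nat.sub_zero] at h2
      rw [pow_of_even (by decide : pa * pa = 1) (by omega), pow_of_even (by decide : pb * pb = 1) (by omega), pow_of_even (by decide : pc * pc = 1) (by omega)] at h2
      simp only [one_mul, mul_one] at h2
      exact (by decide : ([pa, pb] : List (Equiv.Perm (Fin 3))).prod ≠ 1) (eq_one_of_isConj_one (hci 1 h1 _ h2))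
    · have h1 := prodSet_build u [] hmem (by simp) (by simp) (by simp) (by simp)
      simp only [List.prod_nil, List.count_nil, Nat.sub_zero, one_mul] at h1
      rw [pow_of_even (by decide : pa * pa = 1) (by omega), pow_of_even (by decide : pb * pb = 1) (by omega), pow_of_even (by decide : pc * pc = 1) (by omega)] at h1
      simp only [one_mul, mul_one] at h1
      have h2 := prodSet_build u [pa, pb, pa, pb] hmem
        (by simp only [show ([pa, pb, pa, pb] : List (Equiv.Perm (Fin 3))).count pa = 2 from by decide]; omega)
        (by simp only [show ([pa, pb, pa, pb] : List (Equiv.Perm (Fin 3))).count pb = 2 from by decide]; omega)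
        (by simp only [show ([pa, pb, pa, pb] : List (Equiv.Perm (Fin 3))).count pc = 0 from by decide]; omega)
        (by decide)
      simp only [show ([pa, pb, pa, pb] : List (Equiv.Perm (Fin 3))).count pa = 2 from by decide, show ([pa, pb, pa, pb] : List (Equiv.Perm (Fin 3))).count pb = 2 from by decide, show ([pa, pb, pa, pb] : List (Equiv.Perm (Fin 3))).count pc = 0 from by decide, Nat.sub_zero] at h2
      rw [pow_of_even (by decide : pa * pa = 1) (by omega), pow_of_even (by decide : pb * pb = 1) (by omega), pow_of_even (by decide : pc * pc = 1) (by omega)] at h2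
      simp only [one_mul, mul_one] at h2
      exact (by decide : ([pa, pb, pa, pb] : List (Equiv.Perm (Fin 3))).prod ≠ 1) (eq_one_of_isConj_one (hci 1 h1 _ h2))
  · -- conditions → ConjInv
    intro h
    rcases Nat.even_or_odd u.length with hev | hod
    · have hsgn : ∀ x ∈ ProdSet u, Equiv.Perm.sign x = 1 := fun x hx =>
        (sign_of_mem_prodSet htr hx).trans (Even.neg_one_pow hev)
      rcases h with hodd | h
      · exact absurd hodd (Nat.not_odd_iff_even.mpr hev)
      have hne : ∀ x ∈ ProdSet u, x ≠ 1 := by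
        rcases h with ⟨hA, hB, hC, hone⟩ | ⟨hA, hB, hC, hone⟩ | ⟨hA, hB, hC, hone⟩
        · have hu2 : ∀ x ∈ u, x = pa ∨ x = pb := by
            intro x hx
            rcases hmem x hx with rfl | rfl | rfl
            · exact Or.inl rfl
            · exact Or.inr rfl
            · exact absurd (List.count_pos_iff.mpr hx) hC
          rcases hone with h1 | h1
          · exact ne_one_all (by decide) (by decide) (by decide) hu2 h1
          · exact ne_one_all (by decide) (by decide) (by decide)
              (fun x hx => (hu2 x hx).symm) h1
        · have hu2 : ∀ x ∈ u, x = pa ∨ x = pc := by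
            intro x hx
            rcases hmem x hx with rfl | rfl | rfl
            · exact Or.inl rfl
            · exact absurd (List.count_pos_iff.mpr hx) hC
            · exact Or.inr rfl
          rcases hone with h1 | h1
          · exact ne_one_all (by decide) (by decide) (by decide) hu2 h1
          · exact ne_one_all (by decide) (by decide) (by decide)
              (fun x hx => (hu2 x hx).symm) h1
        · have hu2 : ∀ x ∈ u, x = pb ∨ x = pc := by
            intro x hx
            rcases hmem x hx with rfl | rfl | rfl
            · exact absurd (List.count_pos_iff.mpr hx) hC
            · exact Or.inl rfl
            · exact Or.inr rfl
          rcases hone with h1 | h1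
          · exact ne_one_all (by decide) (by decide) (by decide) hu2 h1
          · exact ne_one_all (by decide) (by decide) (by decide)
              (fun x hx => (hu2 x hx).symm) h1
      intro f hf g hg
      exact isConj_pos (hsgn f hf) (hne f hf) (hsgn g hg) (hne g hg)
    · intro f hf g hg
      exact isConj_neg ((sign_of_mem_prodSet htr hf).trans (Odd.neg_one_pow hod))
        ((sign_of_mem_prodSet htr hg).trans (Odd.neg_one_pow hod))
end

section
/- Let n ≥ 4 and let u be a transpositional sequence on Fin n whose graph G(u) is a tree on the whole vertex set Fin n. Suppose the transposition (0 1) occurs exactly twice in u and that the edge {0,1} is not a twig of G(u), i.e., both 0 and 1 have degree at least 2 in G(u). Then u is not conjugacy invariant. -/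
namespace Stmt13Aux
variable {n : ℕ}

lemma fix_mem {C : Fin n → Prop} {f : Equiv.Perm (Fin n)} (hf : ∀ v, ¬ C v → f v = v)
    {v : Fin n} (hv : C v) : C (f v) := by
  by_contra h
  have := f.injective (hf _ h)
  rw [this] at h; exact h hv

lemma fix_not_mem {C : Fin n → Prop} {f : Equiv.Perm (Fin n)} (hf : ∀ v, C v → f v = v)
    {v : Fin n} (hv : ¬ C v) : ¬ C (f v) := by
  intro h
  have := f.injective (hf _ h)
  rw [this] at h; exact hv h

/-- Key lemma, "good" case. -/
lemma key_good {S : Fin n → Prop} {x x' : Fin n} (hx : S x) (hx' : ¬ S x')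
    {f g : Equiv.Perm (Fin n)} (hf : ∀ v, ¬ S v → f v = v) (hg : ∀ v, S v → g v = v)
    (hfx : f x ≠ x) (hgx' : g x' ≠ x') :
    (Equiv.swap x x' * (f * (Equiv.swap x x' * g))).support.card ≠
      (f * g).support.card := by
  have hxx' : x ≠ x' := fun h => hx' (h ▸ hx)
  have hfS : ∀ v, S v → S (f v) := fun v hv => fix_mem hf hv
  have hgS : ∀ v, ¬ S v → ¬ S (g v) := fun v hv => fix_not_mem hg hv
  have hsupp : (Equiv.swap x x' * (f * (Equiv.swap x x' * g))).support =
      ((f * g).support).erase x := by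
    ext v
    simp only [Equiv.Perm.mem_support, Finset.mem_erase, Equiv.Perm.mul_apply]
    by_cases hv : S v
    · rw [hg v hv]
      by_cases hvx : v = x
      · subst hvx
        rw [Equiv.swap_apply_left, hf _ hx', Equiv.swap_apply_right]
        simp
      · have hvx' : v ≠ x' := fun h => hx' (h ▸ hv)
        rw [Equiv.swap_apply_of_ne_of_ne hvx hvx']
        have hfvx' : f v ≠ x' := fun h => hx' (h ▸ hfS v hv)
        by_cases hfvx : f v = x
        · rw [hfvx, Equiv.swap_apply_left]
          exact iff_of_true (fun h => hvx' h.symm) ⟨hvx, fun h => hvx h.symm⟩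
        · rw [Equiv.swap_apply_of_ne_of_ne hfvx hfvx']
          tauto
    · have hvx : v ≠ x := fun h => hv (h ▸ hx)
      have hgv : ¬ S (g v) := hgS v hv
      have hgvx : g v ≠ x := fun h => hgv (h ▸ hx)
      by_cases hgvx' : g v = x'
      · have hvx'2 : v ≠ x' := by
          intro h; subst h; rw [hgvx'] at hgx'; exact hgx' rfl
        rw [hgvx', Equiv.swap_apply_right, hf _ hx']
        have hfxx' : f x ≠ x' := fun h => hx' (h ▸ hfS x hx)
        rw [Equiv.swap_apply_of_ne_of_ne hfx hfxx']
        have h1 : f x ≠ v := fun h => hv (h ▸ hfS x hx)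
        have h2 : x' ≠ v := fun h => hvx'2 h.symm
        tauto
      · rw [Equiv.swap_apply_of_ne_of_ne hgvx hgvx', hf _ hgv,
          Equiv.swap_apply_of_ne_of_ne hgvx hgvx']
        tauto
  rw [hsupp]
  have hmem : x ∈ (f * g).support := by
    simp only [Equiv.Perm.mem_support, Equiv.Perm.mul_apply, hg x hx]
    exact hfx
  rw [Finset.card_erase_of_mem hmem]
  have hpos : 0 < (f * g).support.card := Finset.card_pos.mpr ⟨x, hmem⟩
  omega

/-- Key lemma, "bad" case. -/
lemma key_bad {S : Fin n → Prop} {x y x' : Fin n} (hx : S x) (hy : S y) (hx' : ¬ S x')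
    (hxy : x ≠ y)
    {α ψ : Equiv.Perm (Fin n)} (hα : ∀ v, ¬ S v → α v = v) (hψ : ∀ v, S v → ψ v = v)
    (h1 : α x = y) (h2 : α y = x) :
    (Equiv.swap x y * (Equiv.swap x x' * (α * (Equiv.swap x x' * ψ)))).support.card ≠
      (Equiv.swap x y * (α * ψ)).support.card := by
  have hxx' : x ≠ x' := fun h => hx' (h ▸ hx)
  have hyx' : y ≠ x' := fun h => hx' (h ▸ hy)
  have hαS : ∀ v, S v → S (α v) := fun v hv => fix_mem hα hv
  have hψS : ∀ v, ¬ S v → ¬ S (ψ v) := fun v hv => fix_not_mem hψ hv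
  have hsub : (Equiv.swap x y * (α * ψ)).support ⊂
      (Equiv.swap x y * (Equiv.swap x x' * (α * (Equiv.swap x x' * ψ)))).support := by
    rw [Finset.ssubset_iff_of_subset ?sub]
    case sub =>
      intro v hv
      rw [Equiv.Perm.mem_support] at hv ⊢
      simp only [Equiv.Perm.mul_apply] at hv ⊢
      by_cases hvS : S v
      · rw [hψ v hvS] at hv ⊢
        have hvy : v ≠ y := by
          intro h; subst h; rw [h2, Equiv.swap_apply_left] at hv; exact hv rfl
        have hvx : v ≠ x := by
          intro h; subst h; rw [h1, Equiv.swap_apply_right] at hv; exact hv rfl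
        have hvx' : v ≠ x' := fun h => hx' (h ▸ hvS)
        have hαvx : α v ≠ x := fun h => hvy (α.injective (h.trans h2.symm))
        have hαvy : α v ≠ y := fun h => hvx (α.injective (h.trans h1.symm))
        have hαvx' : α v ≠ x' := fun h => hx' (h ▸ hαS v hvS)
        rw [Equiv.swap_apply_of_ne_of_ne hαvx hαvy] at hv
        rw [Equiv.swap_apply_of_ne_of_ne hvx hvx',
          Equiv.swap_apply_of_ne_of_ne hαvx hαvx',
          Equiv.swap_apply_of_ne_of_ne hαvx hαvy]
        exact hv
      · have hvx : v ≠ x := fun h => hvS (h ▸ hx)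
        have hvy : v ≠ y := fun h => hvS (h ▸ hy)
        have hψv : ¬ S (ψ v) := hψS v hvS
        have hψvx : ψ v ≠ x := fun h => hψv (h ▸ hx)
        have hψvy : ψ v ≠ y := fun h => hψv (h ▸ hy)
        rw [hα _ hψv, Equiv.swap_apply_of_ne_of_ne hψvx hψvy] at hv
        by_cases hp : ψ v = x'
        · rw [hp, Equiv.swap_apply_right, h1,
            Equiv.swap_apply_of_ne_of_ne (Ne.symm hxy) hyx', Equiv.swap_apply_right]
          exact fun h => hvx h.symm
        · rw [Equiv.swap_apply_of_ne_of_ne hψvx hp, hα _ hψv,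
            Equiv.swap_apply_of_ne_of_ne hψvx hp,
            Equiv.swap_apply_of_ne_of_ne hψvx hψvy]
          exact hv
    refine ⟨x, ?_, ?_⟩
    · rw [Equiv.Perm.mem_support]
      simp only [Equiv.Perm.mul_apply]
      rw [hψ x hx, Equiv.swap_apply_left, hα _ hx', Equiv.swap_apply_right,
        Equiv.swap_apply_left]
      exact Ne.symm hxy
    · rw [Equiv.Perm.mem_support]
      simp only [Equiv.Perm.mul_apply, not_not]
      rw [hψ x hx, h1, Equiv.swap_apply_right]
  exact (Finset.card_lt_card hsub).ne'

end Stmt13Aux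


namespace Stmt13Aux
variable {n : ℕ}

lemma fixes_prod {C : Fin n → Prop} {L : List (Equiv.Perm (Fin n))}
    (h : ∀ g ∈ L, ∀ v, C v → g v = v) : ∀ v, C v → L.prod v = v := by
  induction L with
  | nil => intro v _; simp
  | cons g L ih =>
    intro v hv
    rw [List.prod_cons, Equiv.Perm.mul_apply,
      ih (fun g hg => h g (List.mem_cons_of_mem _ hg)) v hv,
      h g (List.mem_cons_self) v hv]

lemma split_list {α : Type*} {P Q : α → Prop} :
    ∀ (L : List α), (∀ g ∈ L, P g ∨ Q g) →
      ∃ M N : List α, L.Perm (M ++ N) ∧ (∀ g ∈ M, P g) ∧ (∀ g ∈ N, Q g) := by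
  intro L
  induction L with
  | nil => exact fun _ => ⟨[], [], List.Perm.refl _, by simp, by simp⟩
  | cons g L ih =>
    intro h
    obtain ⟨M, N, hperm, hM, hN⟩ := ih (fun g hg => h g (List.mem_cons_of_mem _ hg))
    rcases h g (List.mem_cons_self) with hP | hQ
    · exact ⟨g :: M, N, hperm.cons g, by
        intro g' hg'; rcases List.mem_cons.mp hg' with rfl | hg'
        exacts [hP, hM _ hg'], hN⟩
    · refine ⟨M, g :: N, (hperm.cons g).trans List.perm_middle.symm, hM, ?_⟩
      intro g' hg'; rcases List.mem_cons.mp hg' with rfl | hg'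
      exacts [hQ, hN _ hg']

lemma isConj_card_support_eq {f g : Equiv.Perm (Fin n)} (h : IsConj f g) :
    f.support.card = g.support.card := by
  obtain ⟨c, hc⟩ := isConj_iff.mp h
  rw [← hc, Equiv.Perm.card_support_conj]

lemma good_side {C : Fin n → Prop} {x y : Fin n} (hxy : x ≠ y) (hCx : C x) (hCy : C y)
    {L : List (Equiv.Perm (Fin n))} (hL : ∀ g ∈ L, ∀ v, ¬ C v → g v = v)
    (h : ¬ (L.prod x = y ∧ L.prod y = x)) :
    ∃ L' : List (Equiv.Perm (Fin n)), L'.Perm (Equiv.swap x y :: L) ∧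
      (∀ v, ¬ C v → L'.prod v = v) ∧ L'.prod x ≠ x := by
  classical
  have hswapfix : ∀ v, ¬ C v → Equiv.swap x y v = v := fun v hv =>
    Equiv.swap_apply_of_ne_of_ne (fun h => hv (h ▸ hCx)) (fun h => hv (h ▸ hCy))
  by_cases h0 : L.prod x = y
  · refine ⟨L ++ [Equiv.swap x y], List.perm_append_comm, ?_, ?_⟩
    · refine fixes_prod ?_
      intro g hg
      rcases List.mem_append.mp hg with hg | hg
      · exact hL g hg
      · rcases List.mem_singleton.mp hg with rfl
        exact hswapfix
    · rw [List.prod_append, List.prod_singleton, Equiv.Perm.mul_apply,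
        Equiv.swap_apply_left]
      exact fun hh => h ⟨h0, hh⟩
  · refine ⟨Equiv.swap x y :: L, List.Perm.refl _, ?_, ?_⟩
    · refine fixes_prod ?_
      intro g hg
      rcases List.mem_cons.mp hg with rfl | hg
      exacts [hswapfix, hL g hg]
    · rw [List.prod_cons, Equiv.Perm.mul_apply]
      intro hh
      exact h0 ((Equiv.swap x y).injective (hh.trans (Equiv.swap_apply_right x y).symm))

end Stmt13Aux

theorem stmt_13 (n : ℕ) (hn : 4 ≤ n) [NeZero n] (u : List (Equiv.Perm (Fin n)))
    (htr : IsTranspositional u)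
    (hcov : ∀ v : Fin n, ∃ g ∈ u, v ∈ g.support)
    (htree : (TranspGraph u).IsTree)
    (hcount : u.count (Equiv.swap (0 : Fin n) 1) = 2)
    (hdeg0 : ∃ z : Fin n, z ≠ 1 ∧ (TranspGraph u).Adj 0 z)
    (hdeg1 : ∃ z : Fin n, z ≠ 0 ∧ (TranspGraph u).Adj 1 z) :
    ¬ ConjInv u := by
  classical
  intro hCI
  obtain ⟨z, hz1, hadj0z⟩ := hdeg0
  obtain ⟨w, hw0, hadj1w⟩ := hdeg1
  set σ : Equiv.Perm (Fin n) := Equiv.swap 0 1 with hσdef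
  have h01 : (0 : Fin n) ≠ 1 := by
    intro h
    have h2 := congrArg Fin.val h
    rw [Fin.val_zero, Fin.val_one'] at h2
    rw [Nat.mod_eq_of_lt (by omega)] at h2
    omega
  have h0z : (0 : Fin n) ≠ z := hadj0z.1
  have h1w : (1 : Fin n) ≠ w := hadj1w.1
  have ht0z_mem : Equiv.swap 0 z ∈ u := hadj0z.2
  have ht1w_mem : Equiv.swap 1 w ∈ u := hadj1w.2
  have ht0z_ne : Equiv.swap (0 : Fin n) z ≠ σ := by
    intro h
    have h2 : Equiv.swap (0 : Fin n) z 1 = σ 1 := by rw [h]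
    rw [Equiv.swap_apply_of_ne_of_ne (Ne.symm h01) (Ne.symm hz1), hσdef,
      Equiv.swap_apply_right] at h2
    exact h01 h2.symm
  have ht1w_ne : Equiv.swap (1 : Fin n) w ≠ σ := by
    intro h
    have h2 : Equiv.swap (1 : Fin n) w 0 = σ 0 := by rw [h]
    rw [Equiv.swap_apply_of_ne_of_ne h01 (Ne.symm hw0), hσdef,
      Equiv.swap_apply_left] at h2
    exact h01 h2
  have hσu : σ ∈ u := by
    by_contra h
    rw [List.count_eq_zero_of_not_mem h] at hcount
    omega
  -- the bridge
  have hG01 : (TranspGraph u).Adj 0 1 := ⟨h01, hσu⟩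
  have hbridge : ¬ (TranspGraph u \
      SimpleGraph.fromEdgeSet {s((0 : Fin n), (1 : Fin n))}).Reachable 0 1 :=
    ((SimpleGraph.isBridge_iff).mp
      ((SimpleGraph.isAcyclic_iff_forall_adj_isBridge.mp htree.2) hG01))
  set G' : SimpleGraph (Fin n) :=
    TranspGraph u \ SimpleGraph.fromEdgeSet {s((0 : Fin n), (1 : Fin n))} with hG'def
  set A : Fin n → Prop := fun v => G'.Reachable 0 v with hAdef
  have hG'adj : ∀ p q : Fin n, p ≠ q → Equiv.swap p q ∈ u →
      Equiv.swap p q ≠ σ → G'.Adj p q := by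
    intro p q hpq hmem hne
    rw [hG'def, SimpleGraph.sdiff_adj]
    refine ⟨⟨hpq, hmem⟩, ?_⟩
    rw [SimpleGraph.fromEdgeSet_adj]
    rintro ⟨hmem2, -⟩
    rw [Set.mem_singleton_iff, Sym2.eq_iff] at hmem2
    rcases hmem2 with ⟨rfl, rfl⟩ | ⟨rfl, rfl⟩
    · exact hne rfl
    · exact hne (Equiv.swap_comm _ _)
  have hAadj : ∀ p q : Fin n, G'.Adj p q → A p → A q := by
    intro p q ha hp
    exact hp.trans ha.reachable
  have hA0 : A 0 := SimpleGraph.Reachable.refl 0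
  have hA1 : ¬ A 1 := hbridge
  have hAz : A z := hAadj 0 z (hG'adj 0 z h0z ht0z_mem ht0z_ne) hA0
  have hAw : ¬ A w := by
    intro hw
    exact hA1 (hAadj w 1 (hG'adj 1 w h1w ht1w_mem ht1w_ne).symm hw)
  have hz0 : z ≠ 0 := Ne.symm h0z
  -- peel off the two copies of σ
  have hu1 : u.Perm (σ :: u.erase σ) := List.perm_cons_erase hσu
  have hc1 : (u.erase σ).count σ = 1 := by
    rw [List.count_erase_self, hcount]
  have hσu2 : σ ∈ u.erase σ := by
    by_contra h
    rw [List.count_eq_zero_of_not_mem h] at hc1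
    omega
  set r : List (Equiv.Perm (Fin n)) := (u.erase σ).erase σ with hrdef
  have hu2 : u.Perm (σ :: σ :: r) := hu1.trans ((List.perm_cons_erase hσu2).cons σ)
  have hσr : σ ∉ r := by
    have hc2 : r.count σ = 0 := by
      rw [hrdef, List.count_erase_self, hc1]
    exact List.count_eq_zero.mp hc2
  have hru : ∀ g ∈ r, g ∈ u := fun g hg =>
    List.mem_of_mem_erase (List.mem_of_mem_erase hg)
  have ht0z_r : Equiv.swap (0 : Fin n) z ∈ r := by
    have hcr : r.count (Equiv.swap (0 : Fin n) z) = u.count (Equiv.swap (0 : Fin n) z) := by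
      rw [hrdef, List.count_erase_of_ne ht0z_ne, List.count_erase_of_ne ht0z_ne]
    have hcu : 0 < u.count (Equiv.swap (0 : Fin n) z) := List.count_pos_iff.mpr ht0z_mem
    exact List.count_pos_iff.mp (by omega)
  have ht1w_r : Equiv.swap (1 : Fin n) w ∈ r := by
    have hcr : r.count (Equiv.swap (1 : Fin n) w) = u.count (Equiv.swap (1 : Fin n) w) := by
      rw [hrdef, List.count_erase_of_ne ht1w_ne, List.count_erase_of_ne ht1w_ne]
    have hcu : 0 < u.count (Equiv.swap (1 : Fin n) w) := List.count_pos_iff.mpr ht1w_mem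
    exact List.count_pos_iff.mp (by omega)
  -- classify the transpositions of r
  have hclass : ∀ g ∈ r, (∀ v, ¬ A v → g v = v) ∨ (∀ v, A v → g v = v) := by
    intro g hg
    obtain ⟨p, q, hpq, rfl⟩ := htr g (hru g hg)
    have hne : Equiv.swap p q ≠ σ := fun h => hσr (h ▸ hg)
    have hadj := hG'adj p q hpq (hru _ hg) hne
    by_cases hp : A p
    · left
      have hq : A q := hAadj p q hadj hp
      intro v hv
      exact Equiv.swap_apply_of_ne_of_ne (fun h => hv (h ▸ hp)) (fun h => hv (h ▸ hq))
    · right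
      have hq : ¬ A q := fun hq => hp (hAadj q p hadj.symm hq)
      intro v hv
      exact Equiv.swap_apply_of_ne_of_ne (fun h => hp (h ▸ hv)) (fun h => hq (h ▸ hv))
  obtain ⟨M, N, hrMN, hMP, hNQ⟩ := Stmt13Aux.split_list r hclass
  have ht0zM : Equiv.swap (0 : Fin n) z ∈ M := by
    rcases List.mem_append.mp (hrMN.mem_iff.mp ht0z_r) with h | h
    · exact h
    · exfalso
      have := hNQ _ h 0 hA0
      rw [Equiv.swap_apply_left] at this
      exact hz0 this
  have ht1wN : Equiv.swap (1 : Fin n) w ∈ N := by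
    rcases List.mem_append.mp (hrMN.mem_iff.mp ht1w_r) with h | h
    · exfalso
      have := hMP _ h 1 hA1
      rw [Equiv.swap_apply_left] at this
      exact (Ne.symm h1w) this
    · exact h
  set M' : List (Equiv.Perm (Fin n)) := M.erase (Equiv.swap 0 z) with hM'def
  set N' : List (Equiv.Perm (Fin n)) := N.erase (Equiv.swap 1 w) with hN'def
  have hMM' : M.Perm (Equiv.swap 0 z :: M') := List.perm_cons_erase ht0zM
  have hNN' : N.Perm (Equiv.swap 1 w :: N') := List.perm_cons_erase ht1wN
  have hM'P : ∀ g ∈ M', ∀ v, ¬ A v → g v = v := fun g hg =>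
    hMP g (List.mem_of_mem_erase hg)
  have hN'Q : ∀ g ∈ N', ∀ v, A v → g v = v := fun g hg =>
    hNQ g (List.mem_of_mem_erase hg)
  set α' : Equiv.Perm (Fin n) := M'.prod with hα'def
  set β' : Equiv.Perm (Fin n) := N'.prod with hβ'def
  have hα'fix : ∀ v, ¬ A v → α' v = v := Stmt13Aux.fixes_prod hM'P
  have hβ'fix : ∀ v, A v → β' v = v := Stmt13Aux.fixes_prod hN'Q
  have hψfix : ∀ v, A v → (Equiv.swap 1 w * β') v = v := by
    intro v hv
    rw [Equiv.Perm.mul_apply, hβ'fix v hv]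
    exact Equiv.swap_apply_of_ne_of_ne (fun h => hA1 (h ▸ hv)) (fun h => hAw (h ▸ hv))
  have hφfix : ∀ v, ¬ A v → (Equiv.swap 0 z * α') v = v := by
    intro v hv
    rw [Equiv.Perm.mul_apply, hα'fix v hv]
    exact Equiv.swap_apply_of_ne_of_ne (fun h => hv (h ▸ hA0)) (fun h => hv (h ▸ hAz))
  -- a helper to prove the list permutations by counting
  have hperm_tac : ∀ L : List (Equiv.Perm (Fin n)),
      (∀ a, L.count a = ([σ, σ, Equiv.swap 0 z] ++ M' ++ (Equiv.swap 1 w :: N')).count a) →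
      L.Perm u := by
    intro L h
    rw [List.perm_iff_count]
    intro a
    rw [h a, hu2.count_eq]
    simp only [List.count_cons, List.count_append]
    rw [hrMN.count_eq]
    simp only [List.count_append, hMM'.count_eq, hNN'.count_eq, List.count_cons, List.count_nil]
    ring
  have hfinish : ∀ L1 L2 : List (Equiv.Perm (Fin n)), L1.Perm u → L2.Perm u →
      L1.prod.support.card ≠ L2.prod.support.card → False := by
    intro L1 L2 h1 h2 hne
    exact hne (Stmt13Aux.isConj_card_support_eq (hCI _ ⟨L1, h1, rfl⟩ _ ⟨L2, h2, rfl⟩))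
  by_cases hAbad : α' 0 = z ∧ α' z = 0
  · -- the `A`-side is bad
    have hpX : ([Equiv.swap 0 z] ++ M' ++ [Equiv.swap 1 w] ++ N' ++ [σ, σ]).Perm u :=
      hperm_tac _ (by
        intro a
        simp only [List.count_append, List.count_cons, List.count_nil]
        ring)
    have hpW : ([Equiv.swap 0 z, σ] ++ M' ++ [σ, Equiv.swap 1 w] ++ N').Perm u :=
      hperm_tac _ (by
        intro a
        simp only [List.count_append, List.count_cons, List.count_nil]
        ring)
    have hprodX : ([Equiv.swap 0 z] ++ M' ++ [Equiv.swap 1 w] ++ N' ++ [σ, σ]).prod =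
        Equiv.swap 0 z * (α' * (Equiv.swap 1 w * β')) := by
      simp [List.prod_append, List.prod_cons, mul_assoc, hσdef, Equiv.swap_mul_self,
        hα'def, hβ'def]
    have hprodW : ([Equiv.swap 0 z, σ] ++ M' ++ [σ, Equiv.swap 1 w] ++ N').prod =
        Equiv.swap 0 z * (σ * (α' * (σ * (Equiv.swap 1 w * β')))) := by
      simp [List.prod_append, List.prod_cons, mul_assoc, hα'def, hβ'def]
    refine hfinish _ _ hpW hpX ?_
    rw [hprodX, hprodW, hσdef]
    exact Stmt13Aux.key_bad hA0 hAz hA1 h0z hα'fix hψfix hAbad.1 hAbad.2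
  by_cases hBbad : β' 1 = w ∧ β' w = 1
  · -- the `B`-side is bad
    have hpX : ([Equiv.swap 1 w] ++ N' ++ [Equiv.swap 0 z] ++ M' ++ [σ, σ]).Perm u :=
      hperm_tac _ (by
        intro a
        simp only [List.count_append, List.count_cons, List.count_nil]
        ring)
    have hpW : ([Equiv.swap 1 w, σ] ++ N' ++ [σ, Equiv.swap 0 z] ++ M').Perm u :=
      hperm_tac _ (by
        intro a
        simp only [List.count_append, List.count_cons, List.count_nil]
        ring)
    have hprodX : ([Equiv.swap 1 w] ++ N' ++ [Equiv.swap 0 z] ++ M' ++ [σ, σ]).prod =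
        Equiv.swap 1 w * (β' * (Equiv.swap 0 z * α')) := by
      simp [List.prod_append, List.prod_cons, mul_assoc, hσdef, Equiv.swap_mul_self,
        hα'def, hβ'def]
    have hprodW : ([Equiv.swap 1 w, σ] ++ N' ++ [σ, Equiv.swap 0 z] ++ M').prod =
        Equiv.swap 1 w * (σ * (β' * (σ * (Equiv.swap 0 z * α')))) := by
      simp [List.prod_append, List.prod_cons, mul_assoc, hα'def, hβ'def]
    have hkey := Stmt13Aux.key_bad (S := fun v => ¬ A v) hA1 hAw (not_not_intro hA0) h1w
      (fun v hv => hβ'fix v (not_not.mp hv)) hφfix hBbad.1 hBbad.2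
    rw [show (Equiv.swap (1 : Fin n) 0) = Equiv.swap 0 1 from Equiv.swap_comm 1 0] at hkey
    refine hfinish _ _ hpW hpX ?_
    rw [hprodX, hprodW, hσdef]
    exact hkey
  · -- both sides are good
    obtain ⟨LA, hLAp, hLAfix, hLA0⟩ := Stmt13Aux.good_side h0z hA0 hAz hM'P hAbad
    obtain ⟨LB, hLBp, hLBfix, hLB1⟩ := Stmt13Aux.good_side (C := fun v => ¬ A v) h1w hA1 hAw
      (fun g hg v hv => hN'Q g hg v (not_not.mp hv)) hBbad
    have hpX : (LA ++ LB ++ [σ, σ]).Perm u :=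
      hperm_tac _ (by
        intro a
        simp only [List.count_append, hLAp.count_eq, hLBp.count_eq, List.count_cons,
          List.count_nil]
        ring)
    have hpY : ([σ] ++ LA ++ [σ] ++ LB).Perm u :=
      hperm_tac _ (by
        intro a
        simp only [List.count_append, hLAp.count_eq, hLBp.count_eq, List.count_cons,
          List.count_nil]
        ring)
    have hprodX : (LA ++ LB ++ [σ, σ]).prod = LA.prod * LB.prod := by
      simp [List.prod_append, List.prod_cons, mul_assoc, hσdef, Equiv.swap_mul_self]
    have hprodY : ([σ] ++ LA ++ [σ] ++ LB).prod = σ * (LA.prod * (σ * LB.prod)) := by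
      simp [List.prod_append, List.prod_cons, mul_assoc]
    have hkey := Stmt13Aux.key_good hA0 hA1 hLAfix
      (fun v hv => hLBfix v (not_not_intro hv)) hLA0 hLB1
    refine hfinish _ _ hpY hpX ?_
    rw [hprodX, hprodY, hσdef]
    exact hkey
end

section
/- Let n ≥ 3 and let σ(n) denote the list of transpositions [(0 1), (1 2), …, (n−2 n−1), (n−1 0)] of Fin n. For every nonempty proper sublist h of the list [0, 1, …, n−1] there exists a rearrangement f of σ(n) whose left-to-right composition equals (cycle determined by h) composed with the inverse of (cycle determined by h'), where h' is the sublist of [0, 1, …, n−1] complementary to h. -/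
open Fin.NatCast in
/-- `τ(n) = [(0 1), (1 2), …, (n−2 n−1)]` as a list of transpositions of `Fin n`. -/
def tauList (n : ℕ) [NeZero n] : List (Equiv.Perm (Fin n)) :=
  (List.range (n - 1)).map (fun i => Equiv.swap ((i : ℕ) : Fin n) (((i + 1 : ℕ)) : Fin n))

open Fin.NatCast in
/-- `σ(n) = τ(n) ++ [(n−1 0)]`. -/
def sigmaList (n : ℕ) [NeZero n] : List (Equiv.Perm (Fin n)) :=
  tauList n ++ [Equiv.swap (((n - 1 : ℕ)) : Fin n) (0 : Fin n)]

open List Equiv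
open Fin.NatCast

section Generic
variable {α : Type*} [DecidableEq α]

theorem myFormPerm_map (σ : Equiv.Perm α) : ∀ (l : List α),
    List.formPerm (l.map σ) = σ * List.formPerm l * σ⁻¹
  | [] => by simp
  | [x] => by simp
  | x :: y :: t => by
    rw [List.map_cons, List.map_cons, List.formPerm_cons_cons, ← List.map_cons,
      myFormPerm_map σ (y :: t), Equiv.swap_apply_apply, List.formPerm_cons_cons]
    group

/-- merging two cycles sharing exactly the point `b` -/
theorem myFormPerm_merge (b : α) (l₁ l₂ : List α) (h : List.Nodup (b :: (l₁ ++ l₂))) :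
    List.formPerm (b :: l₂) * List.formPerm (b :: l₁) = List.formPerm (b :: (l₁ ++ l₂)) := by
  induction l₁ generalizing b with
  | nil => simp
  | cons a t ih =>
    simp only [List.cons_append] at h ⊢
    have hnd := h
    simp only [List.nodup_cons, List.mem_cons, List.mem_append, not_or] at hnd
    obtain ⟨⟨hba, hbt, hbl2⟩, ⟨hat, hal2⟩, hnd2⟩ := hnd
    have key : List.formPerm (b :: l₂) = Equiv.swap b a * List.formPerm (a :: l₂) * (Equiv.swap b a)⁻¹ := by
      rw [← myFormPerm_map (Equiv.swap b a) (a :: l₂), List.map_cons, Equiv.swap_apply_right]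
      congr 1
      rw [List.map_congr_left, List.map_id]
      intro x hx
      exact Equiv.swap_apply_of_ne_of_ne (fun hxb => hbl2 (hxb ▸ hx)) (fun hxa => hal2 (hxa ▸ hx))
    have ih' : List.formPerm (a :: l₂) * List.formPerm (a :: t) = List.formPerm (a :: (t ++ l₂)) := by
      apply ih
      simp only [List.nodup_cons, List.mem_append, not_or]
      exact ⟨⟨hat, hal2⟩, hnd2⟩
    rw [List.formPerm_cons_cons, key, List.formPerm_cons_cons (l := t ++ l₂), ← ih']
    group

/-- splice version -/
theorem myFormPerm_splice (b : α) (l₁ l₂ : List α) (h : List.Nodup (b :: (l₁ ++ l₂))) :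
    List.formPerm (b :: l₂) * List.formPerm (l₁ ++ [b]) = List.formPerm (l₁ ++ l₂ ++ [b]) := by
  have h1 : List.formPerm (l₁ ++ [b]) = List.formPerm (b :: l₁) := by
    rw [← List.formPerm_rotate_one (b :: l₁) (by
      have := h; simp only [List.nodup_cons, List.mem_append, not_or] at this
      exact List.nodup_cons.mpr ⟨this.1.1, this.2.sublist (List.sublist_append_left _ _)⟩),
      List.rotate_cons_succ, List.rotate_zero]
  have h2 : List.formPerm (l₁ ++ l₂ ++ [b]) = List.formPerm (b :: (l₁ ++ l₂)) := by
    rw [← List.formPerm_rotate_one (b :: (l₁ ++ l₂)) h, List.rotate_cons_succ, List.rotate_zero,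
      List.append_assoc]
  rw [h1, h2, myFormPerm_merge b l₁ l₂ h]
end Generic

section FinStuff
variable (n : ℕ) [NeZero n]


/-- the `i`-th edge transposition -/
def ec (i : ℕ) : Equiv.Perm (Fin n) := Equiv.swap ((i : ℕ) : Fin n) (((i + 1 : ℕ)) : Fin n)

theorem sigma_eq : sigmaList n = (List.range n).map (ec n) := by
  have h1 : n - 1 + 1 = n := Nat.succ_pred_eq_of_pos (NeZero.pos n)
  have h2 : List.range n = List.range (n - 1) ++ [n - 1] := by
    conv_lhs => rw [← h1]
    rw [List.range_succ]
  rw [h2, List.map_append, sigmaList, tauList]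
  congr 1
  simp only [List.map_singleton, ec, h1, Fin.natCast_self]

theorem castInj {x y : ℕ} (hx1 : 1 ≤ x) (hxn : x ≤ n) (hy1 : 1 ≤ y) (hyn : y ≤ n)
    (hxy : (x : Fin n) = (y : Fin n)) : x = y := by
  have := congrArg Fin.val hxy
  simp only [Fin.val_natCast] at this
  rcases Nat.lt_or_ge x n with hx | hx <;> rcases Nat.lt_or_ge y n with hy | hy
  · rwa [Nat.mod_eq_of_lt hx, Nat.mod_eq_of_lt hy] at this
  · have hyn' : y = n := le_antisymm hyn hy
    rw [Nat.mod_eq_of_lt hx, hyn', Nat.mod_self] at this; omega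
  · have hxn' : x = n := le_antisymm hxn hx
    rw [Nat.mod_eq_of_lt hy, hxn', Nat.mod_self] at this; omega
  · omega

theorem nodupCast {N : List ℕ} (h1 : N.Nodup) (h2 : ∀ x ∈ N, 1 ≤ x ∧ x ≤ n) :
    (N.map (Nat.cast : ℕ → Fin n)).Nodup := by
  refine h1.map_on ?_
  intro x hx y hy hxy
  exact castInj n (h2 x hx).1 (h2 x hx).2 (h2 y hy).1 (h2 y hy).2 hxy

theorem ascWord_prod : ∀ (m c : ℕ), 1 ≤ m → c + m ≤ n →
    ((List.range' c m).map (ec n)).prod =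
      List.formPerm ((List.range' c (m + 1)).map (Nat.cast : ℕ → Fin n)) := by
  intro m
  induction m with
  | zero => omega
  | succ m ih =>
    intro c _ hcm
    rcases Nat.eq_zero_or_pos m with rfl | hm
    · rw [show List.range' c (0+1) = [c] from by rw [List.range'_succ, List.range'_zero],
        show List.range' c (0+1+1) = [c, c+1] from by
          rw [List.range'_succ, List.range'_succ, List.range'_zero]]
      simp only [List.map_cons, List.map_nil, List.prod_singleton, List.formPerm_pair]
      rfl
    · rw [show List.range' c (m+1) = c :: List.range' (c+1) m from List.range'_succ (s := c) (n := m) (step := 1),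
        List.map_cons, List.prod_cons, ih (c+1) hm (by omega),
        show List.range' c (m+1+1) = c :: List.range' (c+1) (m+1) from List.range'_succ (s := c) (n := m+1) (step := 1),
        List.map_cons,
        show List.range' (c+1) (m+1) = (c+1) :: List.range' (c+1+1) m from List.range'_succ (s := c+1) (n := m) (step := 1),
        List.map_cons, List.formPerm_cons_cons]
      rfl


def gWord : ℕ → List ℕ → List (Equiv.Perm (Fin n))
  | c, [] => (List.range' c (n - c)).map (ec n)
  | c, b :: bs => gWord b bs ++ (List.range' c (b - c)).map (ec n)

theorem telescope : ∀ (bs : List ℕ) (c : ℕ), 1 ≤ c → c < n →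
    (∀ x ∈ bs, c < x ∧ x < n) → bs.Pairwise (· < ·) →
    (gWord n c bs).prod = List.formPerm
      ((((List.range' c (n - c)).filter (fun x => x ∉ bs)) ++ n :: bs.reverse).map
        (Nat.cast : ℕ → Fin n)) := by
  intro bs
  induction bs with
  | nil =>
    intro c hc1 hcn _ _
    show ((List.range' c (n - c)).map (ec n)).prod = _
    have hfil : (List.range' c (n - c)).filter (fun x => x ∉ ([] : List ℕ)) =
        List.range' c (n - c) := by simp
    have hr : List.range' c (n - c) ++ [n] = List.range' c ((n - c) + 1) := by
      rw [List.range'_1_concat]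
      congr 2
      omega
    rw [hfil, List.reverse_nil]
    rw [show ((n : ℕ) :: ([] : List ℕ)) = [n] from rfl, hr]
    exact ascWord_prod n (n - c) c (by omega) (by omega)
  | cons b bs ih =>
    intro c hc1 hcn hbd hpw
    have hcb : c < b := (hbd b (List.mem_cons_self (a := b) (l := bs))).1
    have hbn : b < n := (hbd b (List.mem_cons_self (a := b) (l := bs))).2
    have hbbs : ∀ x ∈ bs, b < x := (List.pairwise_cons.mp hpw).1
    have hpw' : bs.Pairwise (· < ·) := (List.pairwise_cons.mp hpw).2
    have hbsnd : bs.Nodup := hpw'.imp ne_of_lt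
    have hbd' : ∀ x ∈ bs, b < x ∧ x < n :=
      fun x hx => ⟨hbbs x hx, (hbd x (List.mem_cons_of_mem b hx)).2⟩
    have hbnotbs : b ∉ bs := fun hx => lt_irrefl b (hbbs b hx)
    show ((gWord n b bs) ++ (List.range' c (b - c)).map (ec n)).prod = _
    rw [List.prod_append, ih b (by omega) hbn hbd' hpw',
      ascWord_prod n (b - c) c (by omega) (by omega)]
    set Gb := (List.range' (b + 1) (n - b - 1)).filter (fun x => x ∉ bs) with hGbdef
    have e0 : List.range' b (n - b) = b :: List.range' (b + 1) (n - b - 1) := by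
      rw [show n - b = (n - b - 1) + 1 by omega, List.range'_succ, Nat.add_sub_cancel]
    have e1 : (List.range' b (n - b)).filter (fun x => x ∉ bs) = b :: Gb := by
      rw [e0, List.filter_cons]
      simp [hbnotbs, hGbdef, decide_not]
    have e2 : List.range' c ((b - c) + 1) = List.range' c (b - c) ++ [b] := by
      rw [List.range'_1_concat]
      congr 2
      omega
    have hGb : ∀ x ∈ Gb, b + 1 ≤ x ∧ x < n ∧ x ∉ bs := by
      intro x hx
      rw [hGbdef, List.mem_filter, List.mem_range'_1] at hx
      refine ⟨hx.1.1, by omega, by simpa using hx.2⟩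
    -- nodup of the big ℕ list
    have hM : (b :: (List.range' c (b - c) ++ (Gb ++ n :: bs.reverse))).Nodup := by
      rw [List.nodup_cons]
      constructor
      · intro hmem
        simp only [List.mem_append, List.mem_range'_1, List.mem_cons, List.mem_reverse] at hmem
        rcases hmem with h1 | h2 | h3 | h4
        · omega
        · have := hGb b h2; omega
        · omega
        · exact hbnotbs h4
      · rw [List.nodup_append']
        refine ⟨List.nodup_range', ?_, ?_⟩
        · rw [List.nodup_append']
          refine ⟨(List.nodup_range').filter _, ?_, ?_⟩
          · rw [List.nodup_cons]
            constructor
            · intro hmem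
              rw [List.mem_reverse] at hmem
              have := hbd' n hmem; omega
            · exact (List.nodup_reverse).mpr hbsnd
          · intro x hx hmem
            have hx' := hGb x hx
            simp only [List.mem_cons, List.mem_reverse] at hmem
            rcases hmem with rfl | hmem
            · omega
            · exact hx'.2.2 hmem
        · intro x hx hmem
          rw [List.mem_range'_1] at hx
          simp only [List.mem_append, List.mem_cons, List.mem_reverse] at hmem
          rcases hmem with h2 | rfl | h4
          · have := hGb x h2; omega
          · omega
          · have := hbd' x h4; omega
    have hMc : (((b:ℕ) : Fin n) :: ((List.range' c (b - c)).map (Nat.cast : ℕ → Fin n) ++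
        (Gb ++ (n:ℕ) :: bs.reverse).map (Nat.cast : ℕ → Fin n))).Nodup := by
      have hb : ∀ x ∈ b :: (List.range' c (b - c) ++ (Gb ++ n :: bs.reverse)), 1 ≤ x ∧ x ≤ n := by
        intro x hx
        simp only [List.mem_cons, List.mem_append, List.mem_range'_1, List.mem_reverse] at hx
        rcases hx with rfl | hx | hx | rfl | hx
        · omega
        · omega
        · have := hGb x hx; omega
        · omega
        · have := hbd' x hx; omega
      have := nodupCast n hM hb
      simpa using this
    rw [e1]
    rw [show ((b :: Gb) ++ (n:ℕ) :: bs.reverse).map (Nat.cast : ℕ → Fin n) =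
        ((b:ℕ) : Fin n) :: (Gb ++ (n:ℕ) :: bs.reverse).map (Nat.cast : ℕ → Fin n) by simp]
    rw [e2]
    rw [show (List.range' c (b - c) ++ [b]).map (Nat.cast : ℕ → Fin n) =
        (List.range' c (b - c)).map (Nat.cast : ℕ → Fin n) ++ [((b:ℕ) : Fin n)] by simp]
    rw [myFormPerm_splice ((b:ℕ) : Fin n) _ _ hMc]
    have eL : (List.range' c (n - c)).filter (fun x => x ∉ b :: bs) ++ (n:ℕ) :: (b :: bs).reverse
        = (List.range' c (b - c) ++ (Gb ++ (n:ℕ) :: bs.reverse)) ++ [b] := by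
      have hsplit : List.range' c (n - c) = List.range' c (b - c) ++ List.range' b (n - b) := by
        have := List.range'_append_1 (s := c) (m := b - c) (n := n - b)
        rw [show c + (b - c) = b by omega] at this
        rw [show (b - c) + (n - b) = n - c by omega] at this
        exact this.symm
      have hf1 : (List.range' c (b - c)).filter (fun x => x ∉ b :: bs) = List.range' c (b - c) := by
        rw [List.filter_eq_self]
        intro x hx
        rw [List.mem_range'_1] at hx
        simp only [List.mem_cons, not_or, decide_eq_true_eq]
        exact ⟨by omega, fun hxx => by have := hbbs x hxx; omega⟩
      have hf2 : (List.range' b (n - b)).filter (fun x => x ∉ b :: bs) = Gb := by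
        rw [e0, List.filter_cons_of_neg (by simp)]
        rw [hGbdef]
        apply List.filter_congr
        intro x hx
        rw [List.mem_range'_1] at hx
        have hxb : x ≠ b := by omega
        simp [List.mem_cons, hxb]
      rw [hsplit, List.filter_append, hf1, hf2, List.reverse_cons]
      simp [List.append_assoc]
    rw [show (List.range' c (b - c)).map (Nat.cast : ℕ → Fin n) ++
          (Gb ++ (n:ℕ) :: bs.reverse).map (Nat.cast : ℕ → Fin n) ++ [((b:ℕ) : Fin n)] =
        ((List.range' c (b - c) ++ (Gb ++ (n:ℕ) :: bs.reverse)) ++ [b]).map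
          (Nat.cast : ℕ → Fin n) by simp]
    rw [eL]

end FinStuff

theorem sublist_filter_mem {α : Type*} [DecidableEq α] {l L : List α} (hs : l.Sublist L)
    (hnd : L.Nodup) : L.filter (fun x => x ∈ l) = l := by
  induction hs with
  | slnil => simp
  | @cons l' L' a hs ih =>
    rw [List.nodup_cons] at hnd
    rw [List.filter_cons_of_neg (by simp; exact fun hmem => hnd.1 (hs.subset hmem))]
    exact ih hnd.2
  | @cons_cons l' L' a hs ih =>
    rw [List.nodup_cons] at hnd
    rw [List.filter_cons_of_pos (by simp)]
    congr 1
    rw [List.filter_congr (fun x hx => ?_), ih hnd.2]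
    simp only [List.mem_cons, decide_eq_decide]
    have : x ≠ a := fun hxa => hnd.1 (hxa ▸ hx)
    tauto

theorem gWord_perm (n : ℕ) [NeZero n] : ∀ (bs : List ℕ) (c : ℕ), c ≤ n →
    (∀ x ∈ bs, c < x ∧ x < n) → bs.Pairwise (· < ·) →
    (gWord n c bs).Perm ((List.range' c (n - c)).map (ec n)) := by
  intro bs
  induction bs with
  | nil => intro c _ _ _; exact List.Perm.refl _
  | cons b bs ih =>
    intro c hcn hbd hpw
    have hcb : c < b := (hbd b (List.mem_cons_self (a := b) (l := bs))).1
    have hbn : b < n := (hbd b (List.mem_cons_self (a := b) (l := bs))).2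
    have hbbs : ∀ x ∈ bs, b < x := (List.pairwise_cons.mp hpw).1
    have hsplit : List.range' c (n - c) = List.range' c (b - c) ++ List.range' b (n - b) := by
      have := List.range'_append_1 (s := c) (m := b - c) (n := n - b)
      rw [show c + (b - c) = b by omega] at this
      rw [show (b - c) + (n - b) = n - c by omega] at this
      exact this.symm
    show ((gWord n b bs) ++ (List.range' c (b - c)).map (ec n)).Perm _
    calc (gWord n b bs) ++ (List.range' c (b - c)).map (ec n)
        ~ (List.range' b (n - b)).map (ec n) ++ (List.range' c (b - c)).map (ec n) :=
          (ih b (by omega) (fun x hx => ⟨hbbs x hx, (hbd x (List.mem_cons_of_mem b hx)).2⟩)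
            (List.pairwise_cons.mp hpw).2).append_right _
      _ ~ (List.range' c (b - c)).map (ec n) ++ (List.range' b (n - b)).map (ec n) :=
          List.perm_append_comm
      _ = (List.range' c (n - c)).map (ec n) := by rw [hsplit, List.map_append]

theorem mainCase (n : ℕ) [NeZero n] (h : List (Fin n)) (h0 : (0 : Fin n) ∈ h)
    (hsub : h.Sublist (List.finRange n)) (hprop : h ≠ List.finRange n) :
    ∃ f : List (Equiv.Perm (Fin n)), f.Perm (sigmaList n) ∧
      f.reverse.prod =
        List.formPerm h * (List.formPerm ((List.finRange n).diff h))⁻¹ := by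
  classical
  have hnodupFR := List.nodup_finRange n
  have hdiff : (List.finRange n).diff h = (List.finRange n).filter (fun x => x ∉ h) :=
    hnodupFR.diff_eq_filter
  set hc := (List.finRange n).filter (fun x => x ∉ h) with hhc
  have hfilterh : (List.finRange n).filter (fun x => x ∈ h) = h := sublist_filter_mem hsub hnodupFR
  have hcne : hc ≠ [] := by
    intro hnil
    apply hprop
    apply hsub.eq_of_length
    have hsubset : List.finRange n ⊆ h := by
      intro x hx
      by_contra hxh
      have hxc : x ∈ hc := by rw [hhc]; exact List.mem_filter.mpr ⟨hx, by simpa using hxh⟩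
      rw [hnil] at hxc
      exact List.not_mem_nil hxc
    have hle : n ≤ h.length := by
      simpa [List.length_finRange] using (hnodupFR.subperm hsubset).length_le
    have : h.length ≤ n := by simpa [List.length_finRange] using hsub.length_le
    simp only [List.length_finRange]
    omega
  set bs := hc.map Fin.val with hbs
  have hpwc : hc.Pairwise (· < ·) := (List.pairwise_lt_finRange n).filter _
  have hpw : bs.Pairwise (· < ·) := by
    rw [hbs, List.pairwise_map]
    exact hpwc
  have hbd : ∀ x ∈ bs, 0 < x ∧ x < n := by
    intro x hx
    rw [hbs, List.mem_map] at hx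
    obtain ⟨y, hy, rfl⟩ := hx
    refine ⟨?_, y.isLt⟩
    have hyh : y ∉ h := by
      rw [hhc, List.mem_filter] at hy
      simpa using hy.2
    have hy0 : y ≠ 0 := fun h' => hyh (h' ▸ h0)
    have : y.val ≠ 0 := fun hv => hy0 (Fin.val_injective (by rw [hv, Fin.val_zero]))
    omega
  obtain ⟨b, bs', hbsx⟩ := List.exists_cons_of_ne_nil
    (show bs ≠ [] from fun hx => hcne (List.map_eq_nil_iff.mp (hbs ▸ hx)))
  have hb1 : 1 ≤ b := (hbd b (hbsx ▸ List.mem_cons_self (a := b) (l := bs'))).1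
  have hbn : b < n := (hbd b (hbsx ▸ List.mem_cons_self (a := b) (l := bs'))).2
  have hpw' : (b :: bs').Pairwise (· < ·) := hbsx ▸ hpw
  have hbbs' : ∀ x ∈ bs', b < x := (List.pairwise_cons.mp hpw').1
  have hpw'' : bs'.Pairwise (· < ·) := (List.pairwise_cons.mp hpw').2
  have hbd' : ∀ x ∈ bs', b < x ∧ x < n :=
    fun x hx => ⟨hbbs' x hx, (hbd x (hbsx ▸ List.mem_cons_of_mem b hx)).2⟩
  have hbs'nd : bs'.Nodup := hpw''.imp ne_of_lt
  refine ⟨(gWord n 0 bs).reverse, ?_, ?_⟩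
  · refine (List.reverse_perm _).trans ?_
    refine (gWord_perm n bs 0 (by omega) (fun x hx => (hbd x hx)) hpw).trans ?_
    rw [sigma_eq n, Nat.sub_zero, ← List.range_eq_range']
  rw [List.reverse_reverse]
  -- compute the product
  set Gn := (List.range' (b + 1) (n - b - 1)).filter (fun x => x ∉ bs') with hGn
  have hmemG : ∀ x ∈ Gn, b + 1 ≤ x ∧ x < n ∧ x ∉ bs' := by
    intro x hx
    rw [hGn, List.mem_filter, List.mem_range'_1] at hx
    refine ⟨hx.1.1, by omega, by simpa using hx.2⟩
  have e0 : List.range' b (n - b) = b :: List.range' (b + 1) (n - b - 1) := by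
    rw [show n - b = (n - b - 1) + 1 by omega, List.range'_succ, Nat.add_sub_cancel]
  have e1 : (List.range' b (n - b)).filter (fun x => x ∉ bs') = b :: Gn := by
    rw [e0, List.filter_cons_of_pos (by simpa using fun hmem => by have := hbbs' b hmem; omega)]
  have e2 : List.range' 0 (b + 1) = 0 :: (List.range' 1 (b - 1) ++ [b]) := by
    rw [show b + 1 = (b - 1 + 1) + 1 by omega, List.range'_succ]
    congr 1
    rw [List.range'_1_concat]
    congr 2
    omega
  set G : List (Fin n) := Gn.map (Nat.cast : ℕ → Fin n) with hG
  set r : List (Fin n) := bs'.reverse.map (Nat.cast : ℕ → Fin n) with hr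
  set u' : List (Fin n) := (List.range' 1 (b - 1)).map (Nat.cast : ℕ → Fin n) with hu'
  have hgw : gWord n 0 bs = gWord n b bs' ++ (List.range' 0 b).map (ec n) := by
    rw [hbsx]
    show _ ++ (List.range' 0 (b - 0)).map (ec n) = _
    rw [Nat.sub_zero]
  have htel := telescope n bs' b hb1 hbn hbd' hpw''
  have hasc := ascWord_prod n b 0 hb1 (by omega)
  rw [hgw, List.prod_append, htel, hasc]
  -- reshape factor 1
  have sh1 : (((List.range' b (n - b)).filter (fun x => x ∉ bs') ++ n :: bs'.reverse).map
      (Nat.cast : ℕ → Fin n)) = (b : Fin n) :: (G ++ (0 : Fin n) :: r) := by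
    rw [e1]
    simp only [List.map_append, List.map_cons, List.cons_append, Fin.natCast_self, hG, hr]
  have sh2 : ((List.range' 0 (b + 1)).map (Nat.cast : ℕ → Fin n)) =
      (0 : Fin n) :: (u' ++ [(b : Fin n)]) := by
    rw [e2]
    simp only [List.map_cons, List.map_append, List.map_singleton, List.map_nil,
      Nat.cast_zero, hu']
  rw [sh1, sh2]
  -- nodup facts
  have N1 : ((b : Fin n) :: ((G ++ [(0 : Fin n)]) ++ r)).Nodup := by
    have hnd : (b :: ((Gn ++ [n]) ++ bs'.reverse)).Nodup := by
      rw [List.nodup_cons]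
      constructor
      · intro hmem
        simp only [List.mem_append, List.mem_reverse, List.mem_singleton] at hmem
        rcases hmem with (hg | rfl) | hb2
        · have := hmemG b hg; omega
        · omega
        · have := hbd' b hb2; omega
      · rw [List.nodup_append', List.nodup_append']
        refine ⟨⟨(List.nodup_range').filter _, List.nodup_singleton _, ?_⟩,
          (List.nodup_reverse).mpr hbs'nd, ?_⟩
        · intro x hx hmem
          rw [List.mem_singleton] at hmem
          subst hmem
          have := hmemG x hx; omega
        · intro x hx hmem
          rw [List.mem_reverse] at hmem
          simp only [List.mem_append, List.mem_singleton] at hx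
          rcases hx with hg | rfl
          · exact (hmemG x hg).2.2 hmem
          · have := hbd' x hmem; omega
    have hbd2 : ∀ x ∈ b :: ((Gn ++ [n]) ++ bs'.reverse), 1 ≤ x ∧ x ≤ n := by
      intro x hx
      simp only [List.mem_cons, List.mem_append, List.mem_reverse, List.mem_singleton,
        List.mem_nil_iff, or_false] at hx
      rcases hx with h1 | (hg | h1) | hb2
      · omega
      · have := hmemG x hg; omega
      · omega
      · have := hbd' x hb2; omega
    have := nodupCast n hnd hbd2
    simpa [hG, hr, Fin.natCast_self] using this
  have N2 : ((0 : Fin n) :: (u' ++ [(b : Fin n)])).Nodup := by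
    have hnd : (n :: (List.range' 1 (b - 1) ++ [b])).Nodup := by
      rw [List.nodup_cons, List.nodup_append']
      refine ⟨?_, List.nodup_range', List.nodup_singleton _, ?_⟩
      · intro hmem
        simp only [List.mem_append, List.mem_range'_1, List.mem_singleton] at hmem
        rcases hmem with h1 | rfl <;> omega
      · intro x hx hmem
        rw [List.mem_range'_1] at hx
        rw [List.mem_singleton] at hmem
        omega
    have hbd2 : ∀ x ∈ n :: (List.range' 1 (b - 1) ++ [b]), 1 ≤ x ∧ x ≤ n := by
      intro x hx
      simp only [List.mem_cons, List.mem_append, List.mem_range'_1, List.mem_singleton,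
        List.mem_nil_iff, or_false] at hx
      rcases hx with h1 | h1 | h1 <;> omega
    have := nodupCast n hnd hbd2
    simpa [hu', Fin.natCast_self] using this
  have N5 : (((0 : Fin n) :: (u' ++ G)) ++ ((b : Fin n) :: r)).Nodup := by
    have hnd : ((n :: (List.range' 1 (b - 1) ++ Gn)) ++ (b :: bs'.reverse)).Nodup := by
      simp only [List.cons_append]
      rw [List.nodup_cons]
      constructor
      · intro hmem
        simp only [List.mem_append, List.mem_range'_1, List.mem_cons, List.mem_reverse] at hmem
        rcases hmem with (h1 | hg) | rfl | hb2
        · omega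
        · have := hmemG n hg; omega
        · omega
        · have := hbd' n hb2; omega
      · rw [List.nodup_append']
        refine ⟨?_, ?_, ?_⟩
        · rw [List.nodup_append']
          refine ⟨List.nodup_range', (List.nodup_range').filter _, ?_⟩
          intro x hx hmem
          rw [List.mem_range'_1] at hx
          have := hmemG x hmem
          omega
        · rw [List.nodup_cons]
          refine ⟨?_, (List.nodup_reverse).mpr hbs'nd⟩
          intro hmem
          rw [List.mem_reverse] at hmem
          have := hbbs' b hmem
          omega
        · intro x hx hmem
          simp only [List.mem_append, List.mem_range'_1] at hx
          simp only [List.mem_cons, List.mem_reverse] at hmem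
          rcases hx with h1 | hg
          · rcases hmem with rfl | hb2
            · omega
            · have := hbd' x hb2; omega
          · have hGx := hmemG x hg
            rcases hmem with rfl | hb2
            · omega
            · exact hGx.2.2 hb2
    have hbd2 : ∀ x ∈ (n :: (List.range' 1 (b - 1) ++ Gn)) ++ (b :: bs'.reverse),
        1 ≤ x ∧ x ≤ n := by
      intro x hx
      simp only [List.cons_append, List.mem_cons, List.mem_append, List.mem_range'_1,
        List.mem_reverse] at hx
      rcases hx with rfl | (h1 | hg) | rfl | hb2
      · omega
      · omega
      · have := hmemG x hg; omega
      · omega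
      · have := hbd' x hb2; omega
    have := nodupCast n hnd hbd2
    simpa [hu', hG, hr, Fin.natCast_self] using this
  have N3 : ((0 : Fin n) :: (u' ++ G)).Nodup := (List.sublist_append_left _ _).nodup N5
  have step1 : List.formPerm ((b : Fin n) :: (G ++ (0 : Fin n) :: r)) =
      List.formPerm ((b : Fin n) :: r) * List.formPerm ((b : Fin n) :: (G ++ [(0 : Fin n)])) := by
    rw [myFormPerm_merge _ (G ++ [(0 : Fin n)]) r N1]
    congr 1
    simp [List.append_assoc]
  have step2 : List.formPerm ((0 : Fin n) :: (u' ++ [(b : Fin n)])) =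
      Equiv.swap (0 : Fin n) (b : Fin n) * List.formPerm ((0 : Fin n) :: u') := by
    rw [← myFormPerm_merge (0 : Fin n) u' [(b : Fin n)] N2, List.formPerm_pair]
  have Nrot : ((0 : Fin n) :: (b : Fin n) :: G).Nodup := by
    have hsub1 : ((b : Fin n) :: (G ++ [(0 : Fin n)])).Sublist
        ((b : Fin n) :: ((G ++ [(0 : Fin n)]) ++ r)) :=
      List.Sublist.cons₂ _ (List.sublist_append_left _ _)
    have : ((b : Fin n) :: (G ++ [(0 : Fin n)])).Nodup := hsub1.nodup N1
    refine (List.Perm.nodup ?_ this)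
    calc (b : Fin n) :: (G ++ [(0 : Fin n)])
        ~ (b : Fin n) :: ((0 : Fin n) :: G) := List.Perm.cons _ (List.perm_append_singleton _ _)
      _ ~ (0 : Fin n) :: (b : Fin n) :: G := List.Perm.swap _ _ _
  have step3 : List.formPerm ((b : Fin n) :: (G ++ [(0 : Fin n)])) =
      Equiv.swap (0 : Fin n) (b : Fin n) * List.formPerm ((b : Fin n) :: G) := by
    have hrot : List.formPerm (((0 : Fin n) :: (b : Fin n) :: G).rotate 1) =
        List.formPerm ((0 : Fin n) :: (b : Fin n) :: G) := List.formPerm_rotate_one _ Nrot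
    rw [List.rotate_cons_succ, List.rotate_zero] at hrot
    rw [show ((b : Fin n) :: G) ++ [(0 : Fin n)] = (b : Fin n) :: (G ++ [(0 : Fin n)]) from rfl]
      at hrot
    rw [hrot, List.formPerm_cons_cons]
  have step4 : Equiv.swap (0 : Fin n) (b : Fin n) * List.formPerm ((b : Fin n) :: G) *
      Equiv.swap (0 : Fin n) (b : Fin n) = List.formPerm ((0 : Fin n) :: G) := by
    have hmap : ((b : Fin n) :: G).map (Equiv.swap (0 : Fin n) (b : Fin n)) =
        (0 : Fin n) :: G := by
      rw [List.map_cons, Equiv.swap_apply_right]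
      congr 1
      rw [List.map_congr_left, List.map_id]
      intro x hx
      rw [hG, List.mem_map] at hx
      obtain ⟨g, hg, rfl⟩ := hx
      have hgb := hmemG g hg
      refine Equiv.swap_apply_of_ne_of_ne ?_ ?_
      · intro hg0
        have : (g : Fin n).val = 0 := by rw [hg0]; rfl
        rw [Fin.val_natCast, Nat.mod_eq_of_lt (by omega)] at this
        omega
      · intro hgb'
        have := castInj n (x := g) (y := b) (by omega) (by omega) (by omega) (by omega) hgb'
        omega
    have := myFormPerm_map (Equiv.swap (0 : Fin n) (b : Fin n)) ((b : Fin n) :: G)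
    rw [hmap, Equiv.swap_inv] at this
    rw [← this]
    done
  have step5 : List.formPerm ((0 : Fin n) :: G) * List.formPerm ((0 : Fin n) :: u') =
      List.formPerm ((0 : Fin n) :: (u' ++ G)) := myFormPerm_merge _ u' G N3
  have hcomm : List.formPerm ((b : Fin n) :: r) * List.formPerm ((0 : Fin n) :: (u' ++ G)) =
      List.formPerm ((0 : Fin n) :: (u' ++ G)) * List.formPerm ((b : Fin n) :: r) := by
    have hdisj := List.disjoint_of_nodup_append N5
    refine (Equiv.Perm.Disjoint.commute ?_).eq.symm
    intro x
    by_cases hx : x ∈ (0 : Fin n) :: (u' ++ G)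
    · right
      exact List.formPerm_apply_of_notMem (fun hx2 => hdisj hx hx2)
    · left
      exact List.formPerm_apply_of_notMem hx
  calc List.formPerm ((b : Fin n) :: (G ++ (0 : Fin n) :: r)) *
        List.formPerm ((0 : Fin n) :: (u' ++ [(b : Fin n)]))
      = (List.formPerm ((b : Fin n) :: r) * List.formPerm ((b : Fin n) :: (G ++ [(0 : Fin n)]))) *
        (Equiv.swap (0 : Fin n) (b : Fin n) * List.formPerm ((0 : Fin n) :: u')) := by
        rw [step1, step2]
    _ = List.formPerm ((b : Fin n) :: r) *
        (Equiv.swap (0 : Fin n) (b : Fin n) * List.formPerm ((b : Fin n) :: G) *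
          Equiv.swap (0 : Fin n) (b : Fin n)) * List.formPerm ((0 : Fin n) :: u') := by
        rw [step3]; group
    _ = List.formPerm ((b : Fin n) :: r) * List.formPerm ((0 : Fin n) :: (u' ++ G)) := by
        rw [step4, mul_assoc, step5]
    _ = List.formPerm ((0 : Fin n) :: (u' ++ G)) * List.formPerm ((b : Fin n) :: r) := hcomm
    _ = List.formPerm h * (List.formPerm ((List.finRange n).diff h))⁻¹ := by
        have hsplit0 : List.range' 0 n = List.range' 0 b ++ List.range' b (n - b) := by
          have := List.range'_append_1 (s := 0) (m := b) (n := n - b)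
          rw [show (0:ℕ) + b = b by omega] at this
          rw [show b + (n - b) = n by omega] at this
          exact this.symm
        have C1 : (List.range n).filter (fun x => x ∉ bs) = List.range' 0 b ++ Gn := by
          rw [List.range_eq_range', hsplit0, List.filter_append]
          congr 1
          · rw [List.filter_eq_self]
            intro x hx
            rw [List.mem_range'_1] at hx
            simp only [decide_eq_true_eq, hbsx, List.mem_cons, not_or]
            exact ⟨by omega, fun hxx => by have := hbbs' x hxx; omega⟩
          · rw [e0, List.filter_cons_of_neg (by simp [hbsx]), hGn]
            apply List.filter_congr
            intro x hx
            rw [List.mem_range'_1] at hx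
            have hxb : x ≠ b := by omega
            simp [hbsx, List.mem_cons, hxb]
        have C2 : ((List.range n).filter (fun x => x ∉ bs)).map (Nat.cast : ℕ → Fin n) = h := by
          rw [← (show (List.finRange n).map (fun i : Fin n => (i : ℕ)) = List.range n from
            List.ext_getElem (by simp) (by simp)), List.filter_map, List.map_map]
          have e5 : ∀ x ∈ (List.finRange n).filter ((fun x => decide (x ∉ bs)) ∘ Fin.val),
              ((Nat.cast : ℕ → Fin n) ∘ Fin.val) x = id x := fun x _ => Fin.cast_val_eq_self x
          rw [List.map_congr_left e5, List.map_id]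
          have e6 : ∀ x ∈ List.finRange n,
              ((fun x => decide (x ∉ bs)) ∘ Fin.val) x = decide (x ∈ h) := by
            intro x hx
            simp only [Function.comp, decide_eq_decide]
            rw [hbs, List.mem_map_of_injective Fin.val_injective, hhc, List.mem_filter]
            simp [hx]
          rw [List.filter_congr e6, hfilterh]
        have e3 : List.range' 0 b = 0 :: List.range' 1 (b - 1) := by
          conv_lhs => rw [show b = (b - 1) + 1 by omega]
          rw [List.range'_succ]
        have idh : (0 : Fin n) :: (u' ++ G) = h := by
          calc (0 : Fin n) :: (u' ++ G)
              = (List.range' 0 b ++ Gn).map (Nat.cast : ℕ → Fin n) := by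
                rw [e3]
                simp [hu', hG]
            _ = ((List.range n).filter (fun x => x ∉ bs)).map (Nat.cast : ℕ → Fin n) := by
                rw [C1]
            _ = h := C2
        have hchc : bs.map (Nat.cast : ℕ → Fin n) = hc := by
          rw [hbs, List.map_map]
          have e7 : ∀ x ∈ hc, ((Nat.cast : ℕ → Fin n) ∘ Fin.val) x = id x :=
            fun x _ => Fin.cast_val_eq_self x
          rw [List.map_congr_left e7, List.map_id]
        have idr : List.formPerm ((b : Fin n) :: r) =
            (List.formPerm ((List.finRange n).diff h))⁻¹ := by
          have hnd : ((b : Fin n) :: r).Nodup := (List.sublist_append_right _ _).nodup N5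
          have hrev : hc.reverse = r ++ [(b : Fin n)] := by
            rw [← hchc, hbsx, ← List.map_reverse, List.reverse_cons, List.map_append]
            simp [hr]
          have hrot : List.formPerm (((b : Fin n) :: r).rotate 1) =
              List.formPerm ((b : Fin n) :: r) := List.formPerm_rotate_one _ hnd
          rw [List.rotate_cons_succ, List.rotate_zero] at hrot
          rw [hdiff, ← hrot, ← hrev, List.formPerm_reverse]
        rw [idh, idr]


theorem stmt_17 (n : ℕ) (hn : 3 ≤ n) [NeZero n]
    (h : List (Fin n)) (hne : h ≠ []) (hsub : h.Sublist (List.finRange n))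
    (hprop : h ≠ List.finRange n) :
    ∃ f : List (Equiv.Perm (Fin n)), f.Perm (sigmaList n) ∧
      f.reverse.prod =
        List.formPerm h * (List.formPerm ((List.finRange n).diff h))⁻¹ := by
  classical
  by_cases h0 : (0 : Fin n) ∈ h
  · exact mainCase n h h0 hsub hprop
  · have hnodupFR := List.nodup_finRange n
    set h2 := (List.finRange n).diff h with hh2
    have hdiff : h2 = (List.finRange n).filter (fun x => x ∉ h) := hnodupFR.diff_eq_filter
    have h02 : (0 : Fin n) ∈ h2 := by
      rw [hdiff]
      exact List.mem_filter.mpr ⟨List.mem_finRange 0, by simpa using h0⟩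
    have hsub2 : h2.Sublist (List.finRange n) := by
      rw [hdiff]
      exact List.filter_sublist
    have hprop2 : h2 ≠ List.finRange n := by
      intro hx
      obtain ⟨a, ha⟩ := List.exists_mem_of_ne_nil h hne
      have ha2 : a ∈ h2 := hx ▸ List.mem_finRange a
      rw [hdiff, List.mem_filter] at ha2
      have := ha2.2
      simp only [decide_eq_true_eq] at this
      exact this ha
    obtain ⟨f, hfp, hfe⟩ := mainCase n h2 h02 hsub2 hprop2
    have hdiff2 : (List.finRange n).diff h2 = h := by
      rw [hnodupFR.diff_eq_filter, ← sublist_filter_mem hsub hnodupFR]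
      apply List.filter_congr
      intro x hx
      simp only [decide_eq_decide]
      rw [hdiff, List.mem_filter]
      simp [hx]
    rw [hdiff2] at hfe
    refine ⟨f.reverse, (List.reverse_perm f).trans hfp, ?_⟩
    rw [List.reverse_reverse]
    have hswap : ∀ x ∈ f, (fun y : Equiv.Perm (Fin n) => y⁻¹) x = id x := by
      intro x hx
      have hx2 := hfp.subset hx
      rw [sigma_eq n, List.mem_map] at hx2
      obtain ⟨i, _, rfl⟩ := hx2
      show (ec n i)⁻¹ = ec n i
      simp [ec]
    have hmapinv : f.map (fun y => y⁻¹) = f := by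
      rw [List.map_congr_left hswap, List.map_id]
    have hinv : (f.reverse.prod)⁻¹ = f.prod := by
      rw [List.prod_inv_reverse, List.map_reverse, List.reverse_reverse, hmapinv]
    rw [← hinv, hfe, mul_inv_rev, inv_inv]
end
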